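/- arXiv:2412.14781 — 7 statements merged into one kernel-verified Lean document; each statement's English description precedes it below -/
import Mathlib

section
/- For all u, u' ∈ Ω_β one has ‖S(u) − S(u')‖² ≥ σ‖u − u'‖², where ‖·‖ is the Euclidean norm on ℝ^k. (Proposition 3.1, 'dilatance': the auxiliary map S is uniformly expanding with factor √σ.) -/
lemma mvt_aux {E : Type*} [NormedAddCommGroup E] [NormedSpace ℝ E]
    {f : E → ℝ} {s : Set E} (hs : Convex ℝ s) (ho : IsOpen s)
    (hf : DifferentiableOn ℝ f s) {x y : E} (hx : x ∈ s) (hy : y ∈ s) :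
    ∃ ξ ∈ s, f y - f x = fderiv ℝ f ξ (y - x) := by
  set p : ℝ → E := fun t => x + t • (y - x) with hp
  have hps : ∀ t ∈ Set.Icc (0:ℝ) 1, p t ∈ s := by
    intro t ht
    have : p t = (1 - t) • x + t • y := by
      simp [hp]; module
    rw [this]
    exact hs hx hy (by linarith [ht.2]) ht.1 (by ring)
  have hda : ∀ t ∈ Set.Icc (0:ℝ) 1, DifferentiableAt ℝ f (p t) := fun t ht =>
    hf.differentiableAt (ho.mem_nhds (hps t ht))
  have hder : ∀ t ∈ Set.Ioo (0:ℝ) 1,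
      HasDerivAt (fun t => f (p t)) (fderiv ℝ f (p t) (y - x)) t := by
    intro t ht
    have h1 : HasDerivAt p (y - x) t := by
      have : HasDerivAt (fun t : ℝ => t • (y - x)) ((1:ℝ) • (y - x)) t :=
        (hasDerivAt_id t).smul_const (y - x)
      have h2 := this.const_add x
      rw [one_smul] at h2
      exact h2
    exact ((hda t (Set.mem_Icc_of_Ioo ht)).hasFDerivAt).comp_hasDerivAt t h1
  have hcont : ContinuousOn (fun t => f (p t)) (Set.Icc (0:ℝ) 1) :=
    hf.continuousOn.comp (by fun_prop : Continuous p).continuousOn hps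
  obtain ⟨c, hc, hceq⟩ := exists_hasDerivAt_eq_slope (fun t => f (p t))
    (fun t => fderiv ℝ f (p t) (y - x)) one_pos hcont hder
  refine ⟨p c, hps c (Set.mem_Icc_of_Ioo hc), ?_⟩
  rw [hceq, show p 1 = y by simp [hp], show p 0 = x by simp [hp]]
  ring

lemma clm_sum_aux {k : ℕ} (φ : EuclideanSpace ℝ (Fin k) →L[ℝ] ℝ)
    (w : EuclideanSpace ℝ (Fin k)) :
    φ w = ∑ j, w j * φ (EuclideanSpace.single j 1) := by
  have hw : w = ∑ j, w j • EuclideanSpace.single j (1:ℝ) := by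
    ext i
    have h := map_sum (EuclideanSpace.proj (𝕜:=ℝ) i)
      (fun j => w j • EuclideanSpace.single j (1:ℝ)) Finset.univ
    simp only [PiLp.proj_apply, PiLp.smul_apply, smul_eq_mul,
      EuclideanSpace.single_apply] at h
    rw [h]; simp
  conv_lhs => rw [hw]
  simp [map_sum, smul_eq_mul]


open MeasureTheory

set_option maxHeartbeats 1000000 in
/-- **Proposition `dilatance`.** Under the quantitative conditions on `Φ₀` and with
`γ = (C₁σ)^(−1/2)`, the auxiliary map `S` satisfies `‖S u − S u'‖² ≥ σ‖u − u'‖²`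
for all `u, u' ∈ Ω_β` (Euclidean norm on `ℝ^k`). -/
theorem dilatance (k : ℕ) (hk : 2 ≤ k)
    (L β σ C₁ C₂ : ℝ)
    (hL : 0 < L) (hβ : 0 < β) (hσ : 1 < σ) (hC₁ : 1 < C₁) (hC₂ : 1 < C₂)
    (γ : ℝ) (hγ : γ = (C₁ * σ) ^ (-(1 : ℝ) / 2))
    (Φ₀ : EuclideanSpace ℝ (Fin k) → ℝ)
    (cube : Set (EuclideanSpace ℝ (Fin k)))
    (hcube : cube = {x | ∀ j : Fin k, -(L + β) < x j ∧ x j < L + β})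
    (hΦ : ContDiffOn ℝ 2 Φ₀ cube)
    (hd1 : ∀ x ∈ cube,
      C₁ ^ (k - 1) * C₂ * σ ^ k
        ≤ (fderiv ℝ Φ₀ x (EuclideanSpace.single (⟨0, by omega⟩ : Fin k) 1)) ^ 2)
    (hdj : ∀ x ∈ cube, ∀ j : Fin k, 1 ≤ (j : ℕ) →
      (fderiv ℝ Φ₀ x (EuclideanSpace.single j 1)) ^ 2 ≤ (C₁ - 1) * (C₂ - 1) * σ / (k - 1))
    (Γ : EuclideanSpace ℝ (Fin k) → EuclideanSpace ℝ (Fin k))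
    (hΓ : ∀ x (j : Fin k), Γ x j = γ ^ (-((j : ℕ) : ℤ)) * x j)
    (Ωβ : Set (EuclideanSpace ℝ (Fin k)))
    (hΩβ : Ωβ = {u | ∀ j : Fin k, |u j| < γ ^ (j : ℕ) * (L + β)})
    (S : EuclideanSpace ℝ (Fin k) → EuclideanSpace ℝ (Fin k))
    (hS : ∀ u (i : Fin k),
      (∀ h : (i : ℕ) + 1 < k, S u i = u ⟨(i : ℕ) + 1, h⟩ / γ) ∧
      ((i : ℕ) = k - 1 → S u i = γ ^ (k - 1) * Φ₀ (Γ u))) :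
    ∀ u ∈ Ωβ, ∀ u' ∈ Ωβ, σ * ‖u - u'‖ ^ 2 ≤ ‖S u - S u'‖ ^ 2 := by
  intro u hu u' hu'
  have hσ0 : (0:ℝ) < σ := by linarith
  have hC₁σ : (1:ℝ) < C₁ * σ := by nlinarith
  have hC₁σ0 : (0:ℝ) < C₁ * σ := by linarith
  have hγpos : 0 < γ := by rw [hγ]; positivity
  have hγne : γ ≠ 0 := ne_of_gt hγpos
  have hγsq : γ ^ 2 = (C₁ * σ)⁻¹ := by
    rw [hγ, ← Real.rpow_natCast ((C₁*σ) ^ (-(1:ℝ)/2)) 2, ← Real.rpow_mul hC₁σ0.le]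
    norm_num [Real.rpow_neg_one, mul_inv]
  have hγle1 : γ ≤ 1 := by
    rw [hγ]
    exact le_of_lt (Real.rpow_lt_one_of_one_lt_of_neg hC₁σ (by norm_num))
  -- cube is convex and open
  have hconv : Convex ℝ cube := by
    rw [hcube]
    intro x hx y hy a b ha hb hab
    intro j
    have hxj := hx j; have hyj := hy j
    have : (a • x + b • y) j = a * x j + b * y j := by
      simp [PiLp.add_apply, PiLp.smul_apply, smul_eq_mul]
    rw [this]
    rcases eq_or_lt_of_le ha with h0|h0
    · have hb1 : b = 1 := by linarith
      rw [← h0, hb1]; simpa using hyj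
    · constructor
      · nlinarith [mul_lt_mul_of_pos_left hxj.1 h0,
          mul_le_mul_of_nonneg_left hyj.1.le hb]
      · nlinarith [mul_lt_mul_of_pos_left hxj.2 h0,
          mul_le_mul_of_nonneg_left hyj.2.le hb]
  have hopen : IsOpen cube := by
    rw [hcube]
    have : {x : EuclideanSpace ℝ (Fin k) | ∀ j : Fin k, -(L + β) < x j ∧ x j < L + β}
        = ⋂ j : Fin k, (EuclideanSpace.proj (𝕜 := ℝ) j) ⁻¹' (Set.Ioo (-(L+β)) (L+β)) := by
      ext x; simp [Set.mem_iInter, Set.mem_Ioo]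
    rw [this]
    exact isOpen_iInter_of_finite fun j =>
      isOpen_Ioo.preimage (EuclideanSpace.proj j).continuous
  -- Γ maps Ωβ into cube
  have hmap : ∀ w ∈ Ωβ, Γ w ∈ cube := by
    intro w hw
    rw [hΩβ] at hw; rw [hcube]
    intro j
    have h1 := hw j
    have h2 : |Γ w j| < L + β := by
      rw [hΓ, abs_mul, abs_of_pos (zpow_pos hγpos _)]
      have := mul_lt_mul_of_pos_left h1 (zpow_pos hγpos (-((j:ℕ):ℤ)))
      calc γ ^ (-((j:ℕ):ℤ)) * |w j| < γ ^ (-((j:ℕ):ℤ)) * (γ ^ (j:ℕ) * (L + β)) := this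
        _ = L + β := by
          rw [← zpow_natCast γ (j:ℕ), ← mul_assoc, ← zpow_add₀ hγne]
          simp
    exact abs_lt.mp h2
  -- mean value theorem
  obtain ⟨ξ, hξ, hMVT⟩ := mvt_aux hconv hopen (hΦ.differentiableOn (by norm_num))
    (hmap u' hu') (hmap u hu)
  set d : Fin k → ℝ := fun j => fderiv ℝ Φ₀ ξ (EuclideanSpace.single j 1) with hd
  set v : Fin k → ℝ := fun j => u j - u' j with hv
  set e : Fin k → ℝ := fun j => γ ^ (k-1) * γ ^ (-((j:ℕ):ℤ)) with he
  set D : ℝ := γ ^ (k-1) * (Φ₀ (Γ u) - Φ₀ (Γ u')) with hDdef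
  clear_value d v e D
  have hDsum : D = ∑ j, e j * d j * v j := by
    rw [hDdef, hMVT, clm_sum_aux, Finset.mul_sum]
    apply Finset.sum_congr rfl
    intro j _
    have : (Γ u - Γ u') j = γ ^ (-((j:ℕ):ℤ)) * v j := by
      rw [PiLp.sub_apply, hΓ, hΓ, hv, mul_sub]
    rw [this, he, hd]
    ring
  set z0 : Fin k := ⟨0, by omega⟩ with hz0
  set zl : Fin k := ⟨k-1, by omega⟩ with hzl
  set T : ℝ := ∑ j ∈ Finset.univ.erase z0, v j ^ 2 with hT
  have hT0 : 0 ≤ T := Finset.sum_nonneg fun j _ => sq_nonneg _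
  set a : ℝ := e z0 * d z0 * v z0 with ha
  set b : ℝ := ∑ j ∈ Finset.univ.erase z0, e j * d j * v j with hb
  clear_value z0 zl T a b
  have hDab : D = a + b := by
    rw [hDsum, hb, ha, ← Finset.add_sum_erase _ _ (Finset.mem_univ z0)]
  -- bound for the first coefficient
  have hkk : k - 1 + 1 = k := by omega
  have he0 : e z0 ^ 2 = ((C₁*σ)⁻¹) ^ (k-1) := by
    have : e z0 = γ ^ (k-1) := by simp [he, hz0]

    rw [this, ← pow_mul, mul_comm (k-1) 2, pow_mul, hγsq]
  have ha2 : C₂ * σ * v z0 ^ 2 ≤ a ^ 2 := by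
    have hd0 : C₁ ^ (k - 1) * C₂ * σ ^ k ≤ d z0 ^ 2 := by
      simp only [hd]; exact hd1 ξ hξ
    have hcoeff : ((C₁*σ)⁻¹) ^ (k-1) * (C₁ ^ (k - 1) * C₂ * σ ^ k) = C₂ * σ := by
      have h1 : ((C₁*σ)⁻¹ * (C₁*σ)) = 1 := inv_mul_cancel₀ (ne_of_gt hC₁σ0)
      have hσk : σ ^ k = σ ^ (k-1) * σ := by rw [← pow_succ, hkk]
      calc ((C₁*σ)⁻¹) ^ (k-1) * (C₁ ^ (k - 1) * C₂ * σ ^ k)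
          = ((C₁*σ)⁻¹) ^ (k-1) * (C₁ ^ (k - 1) * C₂ * (σ ^ (k-1) * σ)) := by rw [hσk]
        _ = ((C₁*σ)⁻¹ * (C₁*σ)) ^ (k-1) * (C₂*σ) := by rw [mul_pow, mul_pow]; ring
        _ = C₂ * σ := by rw [h1, one_pow, one_mul]
    have : a ^ 2 = e z0 ^2 * d z0 ^2 * v z0 ^2 := by rw [ha]; ring
    rw [this, he0]
    calc C₂ * σ * v z0 ^ 2 = ((C₁*σ)⁻¹) ^ (k-1) * (C₁ ^ (k - 1) * C₂ * σ ^ k) * v z0 ^2 := by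
          rw [hcoeff]
      _ ≤ ((C₁*σ)⁻¹) ^ (k-1) * d z0 ^2 * v z0 ^2 := by
          apply mul_le_mul_of_nonneg_right _ (sq_nonneg _)
          exact mul_le_mul_of_nonneg_left hd0 (by positivity)
  have hkR : (1:ℝ) ≤ (k:ℝ) - 1 := by
    have : (2:ℝ) ≤ (k:ℝ) := by exact_mod_cast hk
    linarith
  have hej : ∀ j : Fin k, e j ^ 2 ≤ 1 := by
    intro j
    have hj' : ((j:ℕ):ℤ) ≤ (k:ℤ) - 1 := by have := j.isLt; omega
    set m : ℤ := ((k:ℤ)-1) - ((j:ℕ):ℤ) with hm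
    have hm0 : 0 ≤ m := by omega
    have hee : e j = γ ^ m.toNat := by
      rw [he]
      show γ ^ (k-1) * γ ^ (-((j:ℕ):ℤ)) = γ ^ m.toNat
      rw [← zpow_natCast γ (k-1), ← zpow_add₀ hγne]
      have h3 : ((k-1:ℕ):ℤ) + (-((j:ℕ):ℤ)) = (m.toNat : ℤ) := by
        rw [Int.toNat_of_nonneg hm0, hm]; omega
      rw [h3, zpow_natCast]
    rw [hee]
    have h1 : γ ^ m.toNat ≤ 1 := pow_le_one₀ hγpos.le hγle1
    have h2 : 0 ≤ γ ^ m.toNat := by positivity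
    nlinarith
  have hbound : ∀ j ∈ Finset.univ.erase z0,
      (e j * d j) ^2 ≤ (C₁ - 1) * (C₂ - 1) * σ / ((k:ℝ) - 1) := by
    intro j hj
    have hj0 : 1 ≤ (j:ℕ) := by
      rcases Finset.mem_erase.mp hj with ⟨hne, _⟩
      by_contra h
      push_neg at h
      exact hne (Fin.ext (by simp [hz0]; omega))
    have hdj' := hdj ξ hξ j hj0
    calc (e j * d j)^2 = e j ^2 * d j ^2 := by ring
      _ ≤ 1 * d j ^2 := mul_le_mul_of_nonneg_right (hej j) (sq_nonneg _)
      _ = d j ^2 := one_mul _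
      _ ≤ _ := by simp only [hd]; exact hdj'
  have hcard : (Finset.univ.erase z0).card = k - 1 := by
    rw [Finset.card_erase_of_mem (Finset.mem_univ _), Finset.card_univ, Fintype.card_fin]
  have hb2 : b ^2 ≤ (C₁-1)*(C₂-1)*σ * T := by
    have hcs := Finset.sum_mul_sq_le_sq_mul_sq (Finset.univ.erase z0) (fun j => e j * d j) v
    have hsum1 : ∑ j ∈ Finset.univ.erase z0, (e j * d j)^2 ≤ (C₁-1)*(C₂-1)*σ := by
      calc ∑ j ∈ Finset.univ.erase z0, (e j * d j)^2
          ≤ (Finset.univ.erase z0).card • ((C₁-1)*(C₂-1)*σ/((k:ℝ)-1)) :=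
            Finset.sum_le_card_nsmul _ _ _ hbound
        _ = ((k:ℝ) - 1) * ((C₁-1)*(C₂-1)*σ/((k:ℝ)-1)) := by
            rw [hcard, nsmul_eq_mul]
            congr 1
            rw [Nat.cast_sub (by omega : 1 ≤ k), Nat.cast_one]
        _ = (C₁-1)*(C₂-1)*σ := by
            field_simp
    calc b^2 ≤ (∑ j ∈ Finset.univ.erase z0, (e j * d j)^2) * T := by
          rw [hb, hT]; exact hcs
      _ ≤ (C₁-1)*(C₂-1)*σ * T := mul_le_mul_of_nonneg_right hsum1 hT0
  have hC₂1 : (0:ℝ) < C₂ - 1 := by linarith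
  have hkey : σ * v z0 ^2 ≤ D^2 + (C₁-1)*σ*T := by
    have habD : a = D - b := by rw [hDab]; ring
    have h1 : (C₂-1) * a^2 ≤ C₂*(C₂-1)*D^2 + C₂*b^2 := by
      rw [habD]; nlinarith [sq_nonneg ((C₂-1)*D + b)]
    have e1 := mul_le_mul_of_nonneg_left ha2 hC₂1.le
    have e2 := mul_le_mul_of_nonneg_left hb2 (by linarith : (0:ℝ) ≤ C₂)
    have h2 : C₂*(C₂-1)*(σ * v z0^2) ≤ C₂*(C₂-1)*(D^2 + (C₁-1)*σ*T) := by
      nlinarith [e1, e2, h1]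
    have hpos : 0 < C₂*(C₂-1) := by nlinarith
    exact le_of_mul_le_mul_left h2 hpos
  -- norms as sums of squares
  have hnormsq : ∀ (w : EuclideanSpace ℝ (Fin k)), ‖w‖^2 = ∑ j, (w j)^2 := by
    intro w
    rw [EuclideanSpace.norm_eq, Real.sq_sqrt (by positivity)]
    simp [Real.norm_eq_abs, sq_abs]
  have hnorm1 : ‖u - u'‖^2 = v z0 ^2 + T := by
    rw [hnormsq]
    calc ∑ j, ((u - u') j)^2 = ∑ j, v j ^2 := by
          apply Finset.sum_congr rfl; intro j _
          rw [PiLp.sub_apply]; simp [hv]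
      _ = v z0 ^2 + ∑ j ∈ Finset.univ.erase z0, v j ^2 := by
          rw [← Finset.add_sum_erase _ _ (Finset.mem_univ z0)]
      _ = v z0 ^2 + T := by rw [hT]
  have hSterm_last : S u zl - S u' zl = D := by
    have h1 := (hS u zl).2 (by rw [hzl])
    have h2 := (hS u' zl).2 (by rw [hzl])
    rw [h1, h2, hDdef]; ring
  have hnorm2 : ‖S u - S u'‖^2
      = D^2 + ∑ i ∈ Finset.univ.erase zl, (S u i - S u' i)^2 := by
    rw [hnormsq]
    calc ∑ i, ((S u - S u') i)^2 = ∑ i, (S u i - S u' i)^2 := by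
          apply Finset.sum_congr rfl; intro i _; rw [PiLp.sub_apply]
      _ = (S u zl - S u' zl)^2 + ∑ i ∈ Finset.univ.erase zl, (S u i - S u' i)^2 := by
          rw [← Finset.add_sum_erase _ _ (Finset.mem_univ zl)]
      _ = _ := by rw [hSterm_last]
  have hlt : ∀ a : Fin k, a ∈ Finset.univ.erase zl → (a:ℕ) + 1 < k := by
    intro a ha
    have hne := (Finset.mem_erase.mp ha).1
    have h1 : (a:ℕ) ≠ k - 1 := by
      intro h; apply hne; rw [hzl]; exact Fin.ext (by simp only [Fin.val_mk]; omega)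
    have := a.isLt; omega
  have hge1 : ∀ b : Fin k, b ∈ Finset.univ.erase z0 → 1 ≤ (b:ℕ) := by
    intro b hb
    have hne := (Finset.mem_erase.mp hb).1
    by_contra h; push_neg at h
    exact hne (by rw [hz0]; exact Fin.ext (by simp only [Fin.val_mk]; omega))
  have hreindex : ∑ i ∈ Finset.univ.erase zl, (S u i - S u' i)^2
      = ∑ j ∈ Finset.univ.erase z0, (v j / γ)^2 := by
    refine Finset.sum_bij' (fun a ha => (⟨(a:ℕ)+1, hlt a ha⟩ : Fin k))
      (fun b hb => (⟨(b:ℕ)-1, by have := b.isLt; omega⟩ : Fin k)) ?_ ?_ ?_ ?_ ?_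
    · intro a ha
      rw [Finset.mem_erase]
      refine ⟨?_, Finset.mem_univ _⟩
      rw [hz0]; simp [Fin.ext_iff]
    · intro b hb
      rw [Finset.mem_erase]
      refine ⟨?_, Finset.mem_univ _⟩
      have h1 := hge1 b hb
      have h2 := b.isLt
      rw [hzl]; simp only [ne_eq, Fin.mk.injEq]; omega
    · intro a ha; exact Fin.ext (by simp only [Fin.val_mk]; omega)
    · intro b hb
      have h1 := hge1 b hb
      exact Fin.ext (by simp only [Fin.val_mk]; omega)
    · intro a ha
      rw [((hS u a).1 (hlt a ha)), ((hS u' a).1 (hlt a ha))]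
      rw [div_sub_div_same]
      simp [hv]
  have hreindex2 : ∑ j ∈ Finset.univ.erase z0, (v j / γ)^2 = C₁ * σ * T := by
    have hterm : ∀ j, (v j / γ)^2 = C₁ * σ * v j ^2 := by
      intro j
      rw [div_pow, hγsq, div_eq_mul_inv, inv_inv]; ring
    rw [Finset.sum_congr rfl (fun j _ => hterm j), ← Finset.mul_sum, hT]
  rw [hnorm1, hnorm2, hreindex, hreindex2]
  nlinarith [hkey, hT0]
end

section
/- The following hold: (1) the eigenspace of B associated with the value γ^(−2) is exactly { (0, X) ∈ ℝ × ℝ^(k−1) : ⟨X, V⟩ = 0 }, a subspace of dimension k − 2 (so for k ≥ 3, γ^(−2) is an eigenvalue of B of geometric multiplicity k − 2); (2) setting Δ = (γ^(−2) + v₁² + ‖V‖²)² − 4 v₁² γ^(−2), one has Δ > 0, and the two distinct real numbers λ₋ = (γ^(−2) + v₁² + ‖V‖² − √Δ)/2 and λ₊ = (γ^(−2) + v₁² + ‖V‖² + √Δ)/2 are nonzero simple eigenvalues of B, distinct from γ^(−2), with respective eigenvectors (t₋, V) and (t₊, V), where t₊ = (1 − γ^(−2)/λ₊)·v₁ and t₋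 = (1 − γ^(−2)/λ₋)·v₁. (Lemma 'matrice'.) -/
set_option maxHeartbeats 2000000 in
/-- **Lemma `matrice`.** For `B = γ⁻²·diag(0, I_{k−1}) + w·wᵀ` with `w = (v₁, V)`,
`v₁ ≠ 0`, `V ≠ 0` (here `k = n + 1 ≥ 2`):
(1) the eigenspace of `B` for the value `γ⁻²` is exactly
`{(0, X) : ⟨X, V⟩ = 0}`, of dimension `k − 2 = n − 1`;
(2) `Δ > 0` and `λ₋ < λ₊` are nonzero simple eigenvalues of `B`, distinct from `γ⁻²`,
with eigenvectors `(t₋, V)` and `(t₊, V)` where `t± = (1 − γ⁻²/λ±)·v₁`. -/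
theorem matrice (n : ℕ) (hn : 1 ≤ n)
    (γ : ℝ) (hγ : 0 < γ)
    (v₁ : ℝ) (hv₁ : v₁ ≠ 0)
    (V : EuclideanSpace ℝ (Fin n)) (hV : V ≠ 0)
    (w : Fin (n + 1) → ℝ) (hw : w = Fin.cons v₁ (fun i => V i))
    (B : Matrix (Fin (n + 1)) (Fin (n + 1)) ℝ)
    (hB : B = γ ^ (-2 : ℤ) •
        Matrix.diagonal (fun i : Fin (n + 1) => if (i : ℕ) = 0 then (0 : ℝ) else 1)
      + Matrix.vecMulVec w w)
    (Δ : ℝ) (hΔ : Δ = (γ ^ (-2 : ℤ) + v₁ ^ 2 + ‖V‖ ^ 2) ^ 2 - 4 * v₁ ^ 2 * γ ^ (-2 : ℤ))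
    (lm lp : ℝ)
    (hlm : lm = (γ ^ (-2 : ℤ) + v₁ ^ 2 + ‖V‖ ^ 2 - Real.sqrt Δ) / 2)
    (hlp : lp = (γ ^ (-2 : ℤ) + v₁ ^ 2 + ‖V‖ ^ 2 + Real.sqrt Δ) / 2)
    (tm tp : ℝ)
    (htm : tm = (1 - γ ^ (-2 : ℤ) / lm) * v₁)
    (htp : tp = (1 - γ ^ (-2 : ℤ) / lp) * v₁) :
    -- (1) eigenspace of γ⁻², and its dimension k − 2 = n − 1
    ((Module.End.eigenspace (Matrix.toLin' B) (γ ^ (-2 : ℤ)) : Set (Fin (n + 1) → ℝ))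
        = {v | v 0 = 0 ∧ ∑ i : Fin n, v i.succ * V i = 0}
      ∧ Module.finrank ℝ (Module.End.eigenspace (Matrix.toLin' B) (γ ^ (-2 : ℤ))) = n - 1)
    -- (2) the two remaining eigenvalues
    ∧ (0 < Δ
      ∧ lm < lp
      ∧ lm ≠ 0 ∧ lp ≠ 0
      ∧ lm ≠ γ ^ (-2 : ℤ) ∧ lp ≠ γ ^ (-2 : ℤ)
      ∧ Module.End.HasEigenvector (Matrix.toLin' B) lm (Fin.cons tm (fun i => V i))
      ∧ Module.End.HasEigenvector (Matrix.toLin' B) lp (Fin.cons tp (fun i => V i))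
      ∧ Module.finrank ℝ (Module.End.eigenspace (Matrix.toLin' B) lm) = 1
      ∧ Module.finrank ℝ (Module.End.eigenspace (Matrix.toLin' B) lp) = 1) := by
  
  have hg : (0:ℝ) < γ ^ (-2 : ℤ) := by positivity
  generalize hgdef : (γ ^ (-2 : ℤ) : ℝ) = g at hB hΔ hlm hlp htm htp hg ⊢
  obtain ⟨j₀, hj₀⟩ : ∃ j, V j ≠ 0 := by
    by_contra h; push_neg at h; exact hV (by ext j; exact h j)
  have hVs : ‖V‖^2 = ∑ i, V i * V i := by
    rw [← real_inner_self_eq_norm_sq]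
    simp only [PiLp.inner_apply, RCLike.inner_apply, conj_trivial]
  have hVnorm : 0 < ‖V‖ := norm_pos_iff.mpr hV
  have hVpos : 0 < ‖V‖^2 := by positivity
  have hv₁sq : 0 < v₁^2 := by positivity
  -- Δ > 0
  have hΔpos : 0 < Δ := by rw [hΔ]; nlinarith [sq_nonneg (g - v₁^2), hVpos, mul_pos hg hVpos, mul_pos hv₁sq hVpos]
  have hsq : Real.sqrt Δ ^ 2 = Δ := Real.sq_sqrt hΔpos.le
  have hsqpos : 0 < Real.sqrt Δ := Real.sqrt_pos.mpr hΔpos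
  have hsum : lm + lp = g + v₁^2 + ‖V‖^2 := by rw [hlm, hlp]; ring
  have hprod : lm * lp = g * v₁^2 := by
    rw [hlm, hlp]; linear_combination (-1/4) * hsq - (1/4) * hΔ
  have hlt : lm < lp := by rw [hlm, hlp]; linarith
  have hlppos : 0 < lp := by rw [hlp]; positivity
  have hlmpos : 0 < lm := by nlinarith
  have hqm : lm^2 - (g + v₁^2 + ‖V‖^2)*lm + g*v₁^2 = 0 := by
    linear_combination lm * hsum - hprod
  have hqp : lp^2 - (g + v₁^2 + ‖V‖^2)*lp + g*v₁^2 = 0 := by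
    linear_combination lp * hsum - hprod
  have hlmg : lm ≠ g := by intro h; rw [h] at hqm; nlinarith [mul_pos hg hVpos]
  have hlpg : lp ≠ g := by intro h; rw [h] at hqp; nlinarith [mul_pos hg hVpos]
  -- structure of B
  have hBv : ∀ v : Fin (n+1) → ℝ, ∀ i,
      Matrix.toLin' B v i
        = g * (if (i : ℕ) = 0 then 0 else 1) * v i + w i * (∑ j, w j * v j) := by
    intro v i
    rw [hB, Matrix.toLin'_apply, Matrix.add_mulVec, Pi.add_apply, Matrix.smul_mulVec,
      Pi.smul_apply, Matrix.mulVec_diagonal, smul_eq_mul, ← mul_assoc]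
    congr 1
    simp [Matrix.mulVec, dotProduct, Matrix.vecMulVec_apply, Finset.mul_sum, mul_assoc]
  have hS : ∀ v : Fin (n+1) → ℝ,
      (∑ j, w j * v j) = v₁ * v 0 + ∑ i : Fin n, V i * v i.succ := by
    intro v
    rw [Fin.sum_univ_succ, hw]
    simp [Fin.cons_zero, Fin.cons_succ]
  have hw0 : w 0 = v₁ := by rw [hw]; rfl
  have hwsucc : ∀ i : Fin n, w i.succ = V i := by intro i; rw [hw]; simp
  -- membership criterion
  have hmem : ∀ (μ : ℝ) (v : Fin (n+1) → ℝ),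
      v ∈ Module.End.eigenspace (Matrix.toLin' B) μ
        ↔ ∀ i : Fin (n+1),
            g * (if (i : ℕ) = 0 then 0 else 1) * v i + w i * (∑ j, w j * v j) = μ * v i := by
    intro μ v
    rw [Module.End.mem_eigenspace_iff]
    constructor
    · intro h i
      rw [← hBv v i, h, Pi.smul_apply, smul_eq_mul]
    · intro h
      funext i
      rw [hBv v i, h i, Pi.smul_apply, smul_eq_mul]
  -- characterization of eigenspace(g)
  have hchar : ∀ v : Fin (n+1) → ℝ,
      v ∈ Module.End.eigenspace (Matrix.toLin' B) g
        ↔ (v 0 = 0 ∧ ∑ i : Fin n, v i.succ * V i = 0) := by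
    intro v
    rw [hmem g v]
    constructor
    · intro h
      have hSv : (∑ j, w j * v j) = 0 := by
        have h2 := h j₀.succ
        rw [Fin.val_succ, if_neg (Nat.succ_ne_zero _), mul_one, hwsucc j₀] at h2
        have : V j₀ * (∑ j, w j * v j) = 0 := by linarith
        exact (mul_eq_zero.mp this).resolve_left hj₀
      have h0 := h 0
      rw [if_pos (by simp : ((0 : Fin (n+1)) : ℕ) = 0), hw0, hSv, mul_zero, mul_zero,
        zero_mul, add_zero] at h0
      have hv0 : v 0 = 0 := by
        rcases mul_eq_zero.mp h0.symm with h' | h'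
        · exact absurd h' (ne_of_gt hg)
        · exact h'
      refine ⟨hv0, ?_⟩
      rw [hS v, hv0, mul_zero, zero_add] at hSv
      rw [← hSv]
      exact Finset.sum_congr rfl fun i _ => mul_comm _ _
    · rintro ⟨h0, hsum0⟩
      have hSv : (∑ j, w j * v j) = 0 := by
        rw [hS v, h0, mul_zero, zero_add, ← hsum0]
        exact Finset.sum_congr rfl fun i _ => mul_comm _ _
      intro i
      rcases Fin.eq_zero_or_eq_succ i with rfl | ⟨j, rfl⟩
      · simp [hSv, h0]
      · simp [hSv]
  -- part 1a
  have part1a : (Module.End.eigenspace (Matrix.toLin' B) g : Set (Fin (n + 1) → ℝ))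
      = {v | v 0 = 0 ∧ ∑ i : Fin n, v i.succ * V i = 0} := by
    ext v; exact hchar v
  -- part 1b via kernel of L
  have part1b : Module.finrank ℝ (Module.End.eigenspace (Matrix.toLin' B) g) = n - 1 := by
    set L : (Fin (n+1) → ℝ) →ₗ[ℝ] ℝ × ℝ :=
      { toFun := fun v => (v 0, ∑ i : Fin n, v i.succ * V i)
        map_add' := by
          intro x y
          simp [add_mul, Finset.sum_add_distrib, Prod.ext_iff]
        map_smul' := by
          intro c x
          simp [Finset.mul_sum, mul_assoc, Prod.ext_iff] } with hL
    have hker : Module.End.eigenspace (Matrix.toLin' B) g = LinearMap.ker L := by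
      ext v
      rw [LinearMap.mem_ker, hchar v, hL]
      simp [Prod.ext_iff]
    have hsurj : Function.Surjective L := by
      rintro ⟨a, b⟩
      refine ⟨Fin.cons a (fun i => if i = j₀ then b / V j₀ else 0), ?_⟩
      simp only [hL, LinearMap.coe_mk, AddHom.coe_mk, Fin.cons_zero, Fin.cons_succ]
      refine Prod.ext rfl ?_
      simp only [ite_mul, zero_mul]
      rw [Finset.sum_ite_eq' Finset.univ j₀ (fun i => b / V j₀ * V i)]
      simp [div_mul_cancel₀, hj₀]
    have hrank := LinearMap.finrank_range_add_finrank_ker L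
    rw [LinearMap.range_eq_top.mpr hsurj] at hrank
    simp only [finrank_top] at hrank
    have h2 : Module.finrank ℝ (ℝ × ℝ) = 2 := by simp
    have hdom : Module.finrank ℝ (Fin (n+1) → ℝ) = n + 1 := by simp
    rw [hker]
    omega
  -- eigenvectors
  have heig : ∀ (lam t : ℝ), lam ≠ 0 →
      lam^2 - (g + v₁^2 + ‖V‖^2)*lam + g*v₁^2 = 0 → t = (1 - g/lam)*v₁ →
      Matrix.toLin' B (Fin.cons t (fun i => V i) : Fin (n+1) → ℝ)
        = lam • (Fin.cons t (fun i => V i) : Fin (n+1) → ℝ) := by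
    intro lam t hlam hq ht
    have h1 : lam * t = (lam - g) * v₁ := by rw [ht]; field_simp
    have h2 : v₁ * t + ‖V‖^2 = lam - g := by
      apply mul_left_cancel₀ hlam; linear_combination v₁ * h1 - hq
    set u : Fin (n+1) → ℝ := Fin.cons t (fun i => V i) with hu
    have hSu : (∑ j, w j * u j) = v₁ * t + ‖V‖^2 := by
      rw [hS u, hu]
      simp [Fin.cons_zero, Fin.cons_succ, ← hVs]
    funext i
    rw [hBv u i, hSu, Pi.smul_apply, smul_eq_mul]
    rcases Fin.eq_zero_or_eq_succ i with rfl | ⟨j, rfl⟩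
    · simp only [Fin.val_zero, if_pos, hw0, hu, Fin.cons_zero, mul_zero, zero_mul, zero_add]
      rw [h2, h1]; ring
    · simp only [Fin.val_succ, Nat.succ_ne_zero, if_neg, reduceIte, hwsucc, hu, Fin.cons_succ, mul_one]
      rw [h2]; ring
  have hune : ∀ t : ℝ, (Fin.cons t (fun i => V i) : Fin (n+1) → ℝ) ≠ 0 := by
    intro t h
    apply hj₀
    have := congrFun h j₀.succ
    simpa using this
  have hevm : Module.End.HasEigenvector (Matrix.toLin' B) lm (Fin.cons tm (fun i => V i)) :=
    ⟨Module.End.mem_eigenspace_iff.mpr (heig lm tm (ne_of_gt hlmpos) hqm htm), hune tm⟩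
  have hevp : Module.End.HasEigenvector (Matrix.toLin' B) lp (Fin.cons tp (fun i => V i)) :=
    ⟨Module.End.mem_eigenspace_iff.mpr (heig lp tp (ne_of_gt hlppos) hqp htp), hune tp⟩
  -- simplicity
  have hsimple : ∀ (lam t : ℝ), lam ≠ 0 → lam ≠ g → t = (1 - g/lam)*v₁ →
      Module.End.HasEigenvector (Matrix.toLin' B) lam (Fin.cons t (fun i => V i)) →
      Module.finrank ℝ (Module.End.eigenspace (Matrix.toLin' B) lam) = 1 := by
    intro lam t hlam hlamg ht hev
    set u : Fin (n+1) → ℝ := Fin.cons t (fun i => V i) with hu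
    have hspan : Module.End.eigenspace (Matrix.toLin' B) lam = Submodule.span ℝ {u} := by
      apply le_antisymm
      · intro v hv
        rw [hmem lam v] at hv
        set S : ℝ := ∑ j, w j * v j with hSdef
        have hv0 : v 0 = S * v₁ / lam := by
          have h0 := hv 0
          simp only [Fin.val_zero, if_pos, hw0, mul_zero, zero_mul, zero_add] at h0
          field_simp
          linarith [h0]
        have hvs : ∀ i : Fin n, v i.succ = S / (lam - g) * V i := by
          intro i
          have hi := hv i.succ
          simp only [Fin.val_succ, Nat.succ_ne_zero, if_neg, reduceIte, hwsucc, mul_one] at hi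
          have hne : lam - g ≠ 0 := sub_ne_zero.mpr hlamg
          field_simp
          linarith [hi]
        have : v = (S / (lam - g)) • u := by
          funext i
          rcases Fin.eq_zero_or_eq_succ i with rfl | ⟨j, rfl⟩
          · rw [hv0, Pi.smul_apply, hu, Fin.cons_zero, smul_eq_mul, ht]
            have hne : lam - g ≠ 0 := sub_ne_zero.mpr hlamg
            field_simp
          · rw [hvs j, Pi.smul_apply, hu, Fin.cons_succ, smul_eq_mul]
        rw [this]
        exact Submodule.smul_mem _ _ (Submodule.mem_span_singleton_self u)
      · rw [Submodule.span_singleton_le_iff_mem]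
        exact hev.1
    rw [hspan]
    exact finrank_span_singleton hev.2
  exact ⟨⟨part1a, part1b⟩, hΔpos, hlt, ne_of_gt hlmpos, ne_of_gt hlppos, hlmg, hlpg,
    hevm, hevp, hsimple lm tm (ne_of_gt hlmpos) hlmg htm hevm,
    hsimple lp tp (ne_of_gt hlppos) hlpg htp hevp⟩
end

section
/- There exist real numbers r and ρ with 0 < ρ < r < δ such that for every (a, b) ∈ Ω′ the following hold: (1) setting U = B_E(a, r) × B_F(b, r), one has U ⊆ Ω″, and there exist an open set V of E with B_E(a, ρ) ⊆ V ⊆ B_E(a, r) and a C² map φ : V → F such that for every (x, y) ∈ Ω″: ((x, y) ∈ U and f(x, y) = f(a, b)) if and only if (x ∈ V and y = φ(x)); (2) for every x ∈ V, ∂₂f(x, φ(x)) is a continuous linear isomorphism from F onto G and Dφ(x) = −[∂₂f(x, φ(x))]^(−1) ∘ ∂₁f(x, φ(x)). (Theorem 'TFIU', a uniform implicit function theorem.) -/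
set_option maxHeartbeats 1000000

open ContinuousLinearMap in
lemma TFIU_partial1 {E F G : Type*}
    [NormedAddCommGroup E] [NormedSpace ℝ E]
    [NormedAddCommGroup F] [NormedSpace ℝ F]
    [NormedAddCommGroup G] [NormedSpace ℝ G]
    {f : E × F → G} {p : E × F} (h : DifferentiableAt ℝ f p) :
    fderiv ℝ (fun x => f (x, p.2)) p.1 = (fderiv ℝ f p).comp (inl ℝ E F) := by
  have h1 : HasFDerivAt (fun x : E => (x, p.2)) (inl ℝ E F) p.1 :=
    hasFDerivAt_prodMk_left p.1 p.2
  have h2 : HasFDerivAt f (fderiv ℝ f p) ((fun x : E => (x, p.2)) p.1) := by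
    simpa using h.hasFDerivAt
  exact (h2.comp p.1 h1).fderiv

open ContinuousLinearMap in
lemma TFIU_partial2 {E F G : Type*}
    [NormedAddCommGroup E] [NormedSpace ℝ E]
    [NormedAddCommGroup F] [NormedSpace ℝ F]
    [NormedAddCommGroup G] [NormedSpace ℝ G]
    {f : E × F → G} {p : E × F} (h : DifferentiableAt ℝ f p) :
    fderiv ℝ (fun y => f (p.1, y)) p.2 = (fderiv ℝ f p).comp (inr ℝ E F) := by
  have h1 : HasFDerivAt (fun y : F => (p.1, y)) (inr ℝ E F) p.2 :=
    hasFDerivAt_prodMk_right p.1 p.2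
  have h2 : HasFDerivAt f (fderiv ℝ f p) ((fun y : F => (p.1, y)) p.2) := by
    simpa using h.hasFDerivAt
  exact (h2.comp p.2 h1).fderiv

open ContinuousLinearMap in
lemma TFIU_norm_inl_le {E F : Type*}
    [NormedAddCommGroup E] [NormedSpace ℝ E]
    [NormedAddCommGroup F] [NormedSpace ℝ F] :
    ‖inl ℝ E F‖ ≤ 1 ∧ ‖inr ℝ E F‖ ≤ 1 :=
  ⟨opNorm_le_bound _ zero_le_one (fun x => by simp [Prod.norm_def]),
   opNorm_le_bound _ zero_le_one (fun x => by simp [Prod.norm_def])⟩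

open ContinuousLinearMap in
/-- The block "shear" equivalence `(u, v) ↦ (u, B u + e v)`. -/
noncomputable def TFIU_shear {E F G : Type*}
    [NormedAddCommGroup E] [NormedSpace ℝ E]
    [NormedAddCommGroup F] [NormedSpace ℝ F]
    [NormedAddCommGroup G] [NormedSpace ℝ G]
    (B : E →L[ℝ] G) (e : F ≃L[ℝ] G) : (E × F) ≃L[ℝ] (E × G) :=
  ContinuousLinearEquiv.equivOfInverse
    ((fst ℝ E F).prod (B.comp (fst ℝ E F) + (e : F →L[ℝ] G).comp (snd ℝ E F)))
    ((fst ℝ E G).prod ((e.symm : G →L[ℝ] F).comp ((snd ℝ E G) - B.comp (fst ℝ E G))))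
    (fun p => by simp) (fun p => by simp)

lemma TFIU_shear_apply {E F G : Type*}
    [NormedAddCommGroup E] [NormedSpace ℝ E]
    [NormedAddCommGroup F] [NormedSpace ℝ F]
    [NormedAddCommGroup G] [NormedSpace ℝ G]
    (B : E →L[ℝ] G) (e : F ≃L[ℝ] G) (p : E × F) :
    TFIU_shear B e p = (p.1, B p.1 + e p.2) := rfl

open ContinuousLinearMap Metric Set
open scoped NNReal




/-- **Theorem `TFIU` (uniform implicit function theorem).** There exist `0 < ρ < r < δ`
such that around every `(a, b) ∈ Ω′` the equation `f(x, y) = f(a, b)` is solved, inside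
`B(a, r) × B(b, r) ⊆ Ω″`, by a C² map `φ` defined on an open set `V` with
`B(a, ρ) ⊆ V ⊆ B(a, r)`, and `Dφ(x) = −[∂₂f(x, φ(x))]⁻¹ ∘ ∂₁f(x, φ(x))` on `V`. -/
theorem TFIU
    {E F G : Type*}
    [NormedAddCommGroup E] [NormedSpace ℝ E] [CompleteSpace E]
    [NormedAddCommGroup F] [NormedSpace ℝ F] [CompleteSpace F]
    [NormedAddCommGroup G] [NormedSpace ℝ G] [CompleteSpace G]
    (O : Set (E × F)) (hO : IsOpen O)
    (f : E × F → G) (hf : ContDiffOn ℝ 2 f O)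
    (hiso : ∀ p ∈ O, ∃ e : F ≃L[ℝ] G,
      (e : F →L[ℝ] G) = fderiv ℝ (fun y => f (p.1, y)) p.2)
    (Ω' Ω'' : Set (E × F)) (hΩ'open : IsOpen Ω') (hΩ''open : IsOpen Ω'')
    (hsub1 : closure Ω' ⊆ Ω'') (hsub2 : closure Ω'' ⊆ O)
    (hDf : ∃ C : ℝ, ∀ p ∈ closure Ω'', ‖fderiv ℝ f p‖ ≤ C)
    (hD2f : ∃ C : ℝ, ∀ p ∈ closure Ω'', ‖fderiv ℝ (fderiv ℝ f) p‖ ≤ C)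
    (hinv : ∃ C : ℝ, ∀ p ∈ closure Ω'', ∀ e : F ≃L[ℝ] G,
      (e : F →L[ℝ] G) = fderiv ℝ (fun y => f (p.1, y)) p.2 → ‖(e.symm : G →L[ℝ] F)‖ ≤ C)
    (δ : ℝ) (hδpos : 0 < δ)
    (hδ : ∀ p ∈ closure Ω', ∀ q, q ∉ Ω'' → δ ≤ dist p q) :
    ∃ r ρ : ℝ, 0 < ρ ∧ ρ < r ∧ r < δ ∧
      ∀ a : E, ∀ b : F, (a, b) ∈ Ω' →
        (Metric.ball a r ×ˢ Metric.ball b r ⊆ Ω'') ∧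
        ∃ (V : Set E) (φ : E → F),
          IsOpen V ∧ Metric.ball a ρ ⊆ V ∧ V ⊆ Metric.ball a r ∧
          ContDiffOn ℝ 2 φ V ∧
          (∀ x : E, ∀ y : F, (x, y) ∈ Ω'' →
            (((x, y) ∈ Metric.ball a r ×ˢ Metric.ball b r ∧ f (x, y) = f (a, b))
              ↔ (x ∈ V ∧ y = φ x))) ∧
          (∀ x ∈ V, ∃ e : F ≃L[ℝ] G,
            (e : F →L[ℝ] G) = fderiv ℝ (fun y => f (x, y)) (φ x) ∧
            fderiv ℝ φ x
              = -((e.symm : G →L[ℝ] F).comp (fderiv ℝ (fun x' => f (x', φ x)) x))) := by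
  classical
  obtain ⟨L₀, hL₀⟩ := hDf
  obtain ⟨M₀, hM₀⟩ := hD2f
  obtain ⟨C₀, hC₀⟩ := hinv
  set K : ℝ := 1 + max 0 (max L₀ (max M₀ C₀)) with hKdef
  have hK1 : 1 ≤ K := by
    have : (0:ℝ) ≤ max 0 (max L₀ (max M₀ C₀)) := le_max_left _ _
    linarith
  have hK0 : 0 < K := by linarith
  have hKL : ∀ p ∈ closure Ω'', ‖fderiv ℝ f p‖ ≤ K := by
    intro p hp
    have h1 := hL₀ p hp
    have h2 : L₀ ≤ K := by
      have : L₀ ≤ max 0 (max L₀ (max M₀ C₀)) := le_trans (le_max_left _ _) (le_max_right _ _)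
      linarith
    linarith
  have hKM : ∀ p ∈ closure Ω'', ‖fderiv ℝ (fderiv ℝ f) p‖ ≤ K := by
    intro p hp
    have h1 := hM₀ p hp
    have h2 : M₀ ≤ K := by
      have : M₀ ≤ max 0 (max L₀ (max M₀ C₀)) :=
        le_trans (le_trans (le_max_left _ _) (le_max_right _ _)) (le_max_right _ _)
      linarith
    linarith
  have hKC : ∀ p ∈ closure Ω'', ∀ e : F ≃L[ℝ] G,
      (e : F →L[ℝ] G) = fderiv ℝ (fun y => f (p.1, y)) p.2 → ‖(e.symm : G →L[ℝ] F)‖ ≤ K := by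
    intro p hp e he
    have h1 := hC₀ p hp e he
    have h2 : C₀ ≤ K := by
      have : C₀ ≤ max 0 (max L₀ (max M₀ C₀)) :=
        le_trans (le_trans (le_max_right _ _) (le_max_right _ _)) (le_max_right _ _)
      linarith
    linarith
  clear_value K
  set r : ℝ := min (δ/2) (1/(2*K^2)) with hrdef
  have hr0 : 0 < r := lt_min (by linarith) (by positivity)
  have hrδ : r < δ := lt_of_le_of_lt (min_le_left _ _) (by linarith)
  have hKKr : K * (K * r) ≤ 1/2 := by
    have h1 : r ≤ 1/(2*K^2) := min_le_right _ _
    have h2 : K * (K * r) ≤ K * (K * (1/(2*K^2))) := by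
      apply mul_le_mul_of_nonneg_left (mul_le_mul_of_nonneg_left h1 hK0.le) hK0.le
    have h3 : K * (K * (1/(2*K^2))) = 1/2 := by field_simp
    linarith
  clear_value r
  set ρ : ℝ := r / (4*K^2) with hρdef
  have hρ0 : 0 < ρ := by positivity
  have hρr : ρ < r := by
    have h4 : (1:ℝ) < 4*K^2 := by nlinarith
    calc ρ < r / 1 := by apply div_lt_div_of_pos_left hr0 one_pos h4
    _ = r := div_one r
  clear_value ρ
  -- basic differentiability facts
  have hfdAt : ∀ p ∈ O, DifferentiableAt ℝ f p := fun p hp =>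
    (hf.contDiffAt (hO.mem_nhds hp)).differentiableAt two_ne_zero
  have hDfdAt : ∀ p ∈ O, DifferentiableAt ℝ (fderiv ℝ f) p := fun p hp =>
    ((hf.contDiffAt (hO.mem_nhds hp)).fderiv_right
      (by norm_num : (1:WithTop ℕ∞) + 1 ≤ 2)).differentiableAt one_ne_zero
  refine ⟨r, ρ, hρ0, hρr, hrδ, ?_⟩
  intro a b hab
  have habΩ'' : (a, b) ∈ Ω'' := hsub1 (subset_closure hab)
  have hballsub : ball (a, b) r ⊆ Ω'' := by
    intro q hq
    by_contra hq'
    have h1 := hδ (a, b) (subset_closure hab) q hq'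
    rw [mem_ball, dist_comm] at hq
    linarith
  have hUsub : ball a r ×ˢ ball b r ⊆ Ω'' := by rw [ball_prod_same]; exact hballsub
  have hsO : ball (a, b) r ⊆ O := fun q hq => hsub2 (subset_closure (hballsub hq))
  have hscl : ball (a, b) r ⊆ closure Ω'' := fun q hq => subset_closure (hballsub hq)
  have habmem : (a, b) ∈ ball (a, b) r := mem_ball_self hr0
  have habO : (a, b) ∈ O := hsO habmem
  -- Lipschitz estimate for Df on the ball
  have hDflip : ∀ p ∈ ball (a, b) r, ‖fderiv ℝ f p - fderiv ℝ f (a, b)‖ ≤ K * r := by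
    intro p hp
    have h1 : ‖fderiv ℝ f p - fderiv ℝ f (a, b)‖ ≤ K * ‖p - (a, b)‖ := by
      apply (convex_ball _ _).norm_image_sub_le_of_norm_hasFDerivWithin_le
        (f' := fun q => fderiv ℝ (fderiv ℝ f) q)
        (fun q hq => ((hDfdAt q (hsO hq)).hasFDerivAt).hasFDerivWithinAt)
        (fun q hq => hKM q (hscl hq)) habmem hp
    have h2 : ‖p - (a, b)‖ ≤ r := by
      rw [← dist_eq_norm]; exact (mem_ball.mp hp).le
    calc ‖fderiv ℝ f p - fderiv ℝ f (a, b)‖ ≤ K * ‖p - (a, b)‖ := h1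
    _ ≤ K * r := mul_le_mul_of_nonneg_left h2 hK0.le
  obtain ⟨e, he⟩ := hiso (a, b) habO
  have hesymm : ‖(e.symm : G →L[ℝ] F)‖ ≤ K := hKC (a, b) (subset_closure habΩ'') e he
  have heC : (e : F →L[ℝ] G) = (fderiv ℝ f (a, b)).comp (inr ℝ E F) := by
    rw [he]; exact TFIU_partial2 (hfdAt _ habO)
  have hprodmem : ∀ {x : E} {y : F}, x ∈ ball a r → y ∈ ball b r → (x, y) ∈ ball (a, b) r := by
    intro x y hx hy
    rw [← ball_prod_same]; exact ⟨hx, hy⟩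
  -- partial derivative in y close to e, on the ball
  have hd2close : ∀ x ∈ ball a r, ∀ y ∈ ball b r,
      ‖(fderiv ℝ f (x, y)).comp (inr ℝ E F) - (e : F →L[ℝ] G)‖ ≤ K * r := by
    intro x hx y hy
    rw [heC, ← sub_comp]
    calc ‖(fderiv ℝ f (x, y) - fderiv ℝ f (a, b)).comp (inr ℝ E F)‖
        ≤ ‖fderiv ℝ f (x, y) - fderiv ℝ f (a, b)‖ * ‖inr ℝ E F‖ := opNorm_comp_le _ _
    _ ≤ (K * r) * 1 := by
        apply mul_le_mul (hDflip _ (hprodmem hx hy)) TFIU_norm_inl_le.2 (norm_nonneg _)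
        positivity
    _ = K * r := mul_one _
  -- MVT in y
  have hmvt2 : ∀ x ∈ ball a r, ∀ y ∈ ball b r, ∀ y' ∈ ball b r,
      ‖f (x, y) - f (x, y') - (e (y - y'))‖ ≤ (K * r) * ‖y - y'‖ := by
    intro x hx y hy y' hy'
    have h1 : ‖(f (x, y) - e y) - (f (x, y') - e y')‖ ≤ (K * r) * ‖y - y'‖ := by
      apply (convex_ball b r).norm_image_sub_le_of_norm_hasFDerivWithin_le
        (f' := fun y0 => (fderiv ℝ f (x, y0)).comp (inr ℝ E F) - (e : F →L[ℝ] G))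
        ?_ (fun y0 hy0 => hd2close x hx y0 hy0) hy' hy
      intro y0 hy0
      have hA : HasFDerivAt (fun y1 => f (x, y1)) ((fderiv ℝ f (x, y0)).comp (inr ℝ E F)) y0 := by
        have := (hfdAt (x, y0) (hsO (hprodmem hx hy0))).hasFDerivAt
        exact this.comp y0 (hasFDerivAt_prodMk_right x y0)
      exact ((hA.sub ((e : F →L[ℝ] G).hasFDerivAt)).hasFDerivWithinAt)
    have h2 : (f (x, y) - e y) - (f (x, y') - e y') = f (x, y) - f (x, y') - e (y - y') := by
      rw [map_sub]; abel
    rw [h2] at h1; exact h1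
  -- MVT in x at y = b
  have hmvt1 : ∀ x ∈ ball a r, ‖f (x, b) - f (a, b)‖ ≤ K * ‖x - a‖ := by
    intro x hx
    have hb : b ∈ ball b r := mem_ball_self hr0
    apply (convex_ball a r).norm_image_sub_le_of_norm_hasFDerivWithin_le
      (f' := fun x0 => (fderiv ℝ f (x0, b)).comp (inl ℝ E F)) ?_ ?_ (mem_ball_self hr0) hx
    · intro x0 hx0
      have := (hfdAt (x0, b) (hsO (hprodmem hx0 hb))).hasFDerivAt
      exact (this.comp x0 (hasFDerivAt_prodMk_left x0 b)).hasFDerivWithinAt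
    · intro x0 hx0
      calc ‖(fderiv ℝ f (x0, b)).comp (inl ℝ E F)‖
          ≤ ‖fderiv ℝ f (x0, b)‖ * ‖inl ℝ E F‖ := opNorm_comp_le _ _
      _ ≤ K * 1 := mul_le_mul (hKL _ (hscl (hprodmem hx0 hb))) TFIU_norm_inl_le.1
            (norm_nonneg _) hK0.le
      _ = K := mul_one K
  set c := f (a, b) with hcdef
  -- contraction estimate
  have hcontr : ∀ x ∈ ball a r, ∀ y ∈ ball b r, ∀ y' ∈ ball b r,
      ‖(y - e.symm (f (x, y) - c)) - (y' - e.symm (f (x, y') - c))‖ ≤ (1/2) * ‖y - y'‖ := by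
    intro x hx y hy y' hy'
    have hkey : (y - e.symm (f (x, y) - c)) - (y' - e.symm (f (x, y') - c))
        = e.symm (e (y - y') - (f (x, y) - f (x, y'))) := by
      simp only [map_sub, e.symm_apply_apply]
      abel
    rw [hkey]
    calc ‖e.symm (e (y - y') - (f (x, y) - f (x, y')))‖
        ≤ ‖(e.symm : G →L[ℝ] F)‖ * ‖e (y - y') - (f (x, y) - f (x, y'))‖ :=
          (e.symm : G →L[ℝ] F).le_opNorm _
    _ ≤ K * ((K * r) * ‖y - y'‖) := by
        apply mul_le_mul hesymm ?_ (norm_nonneg _) hK0.le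
        rw [← norm_neg]
        have : -(e (y - y') - (f (x, y) - f (x, y'))) = f (x, y) - f (x, y') - e (y - y') := by abel
        rw [this]
        exact hmvt2 x hx y hy y' hy'
    _ = (K * (K * r)) * ‖y - y'‖ := by ring
    _ ≤ (1/2) * ‖y - y'‖ := mul_le_mul_of_nonneg_right hKKr (norm_nonneg _)
  -- uniqueness
  have huniq : ∀ x ∈ ball a r, ∀ y ∈ ball b r, ∀ y' ∈ ball b r,
      f (x, y) = c → f (x, y') = c → y = y' := by
    intro x hx y hy y' hy' h1 h2
    have h3 := hcontr x hx y hy y' hy'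
    rw [h1, h2, sub_self, map_zero, sub_zero, sub_zero] at h3
    have h4 : ‖y - y'‖ = 0 := by
      have := norm_nonneg (y - y'); linarith
    rw [← sub_eq_zero]
    exact norm_eq_zero.mp h4
  -- existence on ball a ρ
  have hexists : ∀ x ∈ ball a ρ, ∃ y, y ∈ ball b r ∧ f (x, y) = c := by
    intro x hx
    have hxr : x ∈ ball a r := ball_subset_ball hρr.le hx
    set T : F → F := fun y => y - e.symm (f (x, y) - c) with hTdef
    have hsub' : closedBall b (r/2) ⊆ ball b r := closedBall_subset_ball (by linarith)
    have hTb : ‖T b - b‖ ≤ r / 4 := by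
      have h1 : T b - b = -(e.symm (f (x, b) - c)) := by rw [hTdef]; simp
      rw [h1, norm_neg]
      calc ‖e.symm (f (x, b) - c)‖ ≤ ‖(e.symm : G →L[ℝ] F)‖ * ‖f (x, b) - c‖ :=
            (e.symm : G →L[ℝ] F).le_opNorm _
      _ ≤ K * (K * ‖x - a‖) := by
          apply mul_le_mul hesymm (hmvt1 x hxr) (norm_nonneg _) hK0.le
      _ ≤ K * (K * ρ) := by
          have : ‖x - a‖ ≤ ρ := by rw [← dist_eq_norm]; exact (mem_ball.mp hx).le
          nlinarith
      _ = r / 4 := by rw [hρdef]; field_simp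
    have hmaps : Set.MapsTo T (closedBall b (r/2)) (closedBall b (r/2)) := by
      intro y hy
      rw [mem_closedBall, dist_eq_norm]
      have h1 : ‖T y - T b‖ ≤ (1/2) * ‖y - b‖ :=
        hcontr x hxr y (hsub' hy) b (mem_ball_self hr0)
      have h2 : ‖y - b‖ ≤ r/2 := by rw [← dist_eq_norm]; exact mem_closedBall.mp hy
      calc ‖T y - b‖ ≤ ‖T y - T b‖ + ‖T b - b‖ := by
            have : T y - b = (T y - T b) + (T b - b) := by abel
            rw [this]; exact norm_add_le _ _
      _ ≤ (1/2) * (r/2) + r/4 := by linarith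
      _ = r/2 := by ring
    have hcomp : IsComplete (closedBall b (r/2)) := isClosed_closedBall.isComplete
    have hcw : ContractingWith (1/2 : ℝ≥0) (hmaps.restrict T _ _) := by
      constructor
      · have h : ((1/2:ℝ≥0):ℝ) < ((1:ℝ≥0):ℝ) := by norm_num
        exact_mod_cast h
      · rw [lipschitzWith_iff_dist_le_mul]
        rintro ⟨y, hy⟩ ⟨y', hy'⟩
        have h1 := hcontr x hxr y (hsub' hy) y' (hsub' hy')
        have hco : ((1/2 : ℝ≥0) : ℝ) = 1/2 := by norm_num
        simp only [Set.MapsTo.restrict, Subtype.dist_eq, Subtype.map_coe]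
        rw [dist_eq_norm, dist_eq_norm, hco]
        exact h1
    set y₀ := ContractingWith.efixedPoint' T hcomp hmaps hcw b (mem_closedBall_self (by linarith))
      (edist_ne_top _ _) with hy₀def
    have hy₀mem : y₀ ∈ closedBall b (r/2) :=
      ContractingWith.efixedPoint_mem' hcomp hmaps hcw _ _
    have hy₀fix : T y₀ = y₀ :=
      ContractingWith.efixedPoint_isFixedPt' hcomp hmaps hcw _ _
    refine ⟨y₀, hsub' hy₀mem, ?_⟩
    have h1 : e.symm (f (x, y₀) - c) = 0 := by
      have := hy₀fix
      rw [hTdef] at this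
      simp only at this
      have h2 : y₀ - e.symm (f (x, y₀) - c) = y₀ := this
      have := sub_eq_self.mp h2
      exact this
    have h2 : f (x, y₀) - c = 0 := by
      have := congrArg e h1
      rwa [e.apply_symm_apply, map_zero] at this
    exact sub_eq_zero.mp h2
  set V : Set E := {x | x ∈ ball a r ∧ ∃ y, y ∈ ball b r ∧ f (x, y) = c} with hVdef
  have hVsub : V ⊆ ball a r := fun x hx => hx.1
  set φ : E → F := fun x => if h : ∃ y, y ∈ ball b r ∧ f (x, y) = c then h.choose else b with hφdef
  have hφspec : ∀ x ∈ V, φ x ∈ ball b r ∧ f (x, φ x) = c := by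
    intro x hx
    rw [hφdef]
    simp only
    rw [dif_pos hx.2]
    exact hx.2.choose_spec
  have hρV : ball a ρ ⊆ V := fun x hx => ⟨ball_subset_ball hρr.le hx, hexists x hx⟩
  have hloc : ∀ x₀ ∈ V, (∀ᶠ x in nhds x₀, x ∈ V) ∧ ContDiffAt ℝ 2 φ x₀ := by
    intro x₀ hx₀
    have hx₀r : x₀ ∈ ball a r := hx₀.1
    obtain ⟨hφ₀ball, hφ₀eq⟩ := hφspec x₀ hx₀
    set p₀ : E × F := (x₀, φ x₀) with hp₀def
    have hp₀ball : p₀ ∈ ball (a, b) r := hprodmem hx₀r hφ₀ball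
    have hp₀O : p₀ ∈ O := hsO hp₀ball
    obtain ⟨e₂, he₂⟩ := hiso p₀ hp₀O
    have he₂' : (e₂ : F →L[ℝ] G) = (fderiv ℝ f p₀).comp (inr ℝ E F) := by
      rw [he₂]; exact TFIU_partial2 (hfdAt _ hp₀O)
    set B : E →L[ℝ] G := (fderiv ℝ f p₀).comp (inl ℝ E F) with hBdef
    set N := TFIU_shear B e₂ with hNdef
    set g : E × F → E × G := fun p => (p.1, f p) with hgdef
    have hgC : ContDiffAt ℝ 2 g p₀ := contDiffAt_fst.prodMk (hf.contDiffAt (hO.mem_nhds hp₀O))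
    have hNcoe : (N : (E × F) →L[ℝ] (E × G)) = (fst ℝ E F).prod (fderiv ℝ f p₀) := by
      apply ContinuousLinearMap.ext
      intro p
      have h1 : (N : (E × F) →L[ℝ] (E × G)) p = (p.1, B p.1 + e₂ p.2) := rfl
      have h2 : ((fst ℝ E F).prod (fderiv ℝ f p₀)) p = (p.1, fderiv ℝ f p₀ p) := rfl
      rw [h1, h2]
      refine Prod.ext rfl ?_
      show B p.1 + e₂ p.2 = fderiv ℝ f p₀ p
      have h3 : e₂ p.2 = fderiv ℝ f p₀ (0, p.2) := by
        rw [← ContinuousLinearEquiv.coe_coe, he₂']; rfl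
      have h4 : B p.1 = fderiv ℝ f p₀ (p.1, 0) := rfl
      rw [h3, h4, ← map_add]
      congr 1
      simp
    have hgd : HasFDerivAt g ((N : (E × F) →L[ℝ] (E × G))) p₀ := by
      rw [hNcoe]
      exact hasFDerivAt_fst.prodMk (hfdAt p₀ hp₀O).hasFDerivAt
    have hn12 : (2 : WithTop ℕ∞) ≠ 0 := two_ne_zero
    set ginv := hgC.localInverse hgd hn12 with hginvdef
    have hs : HasStrictFDerivAt g ((N : (E × F) →L[ℝ] (E × G))) p₀ :=
      hgC.hasStrictFDerivAt' hgd hn12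
    have hginvC : ContDiffAt ℝ 2 ginv (g p₀) := hgC.to_localInverse hgd hn12
    have hginv_eq : ginv = hs.localInverse g N p₀ := rfl
    have happ : ginv (g p₀) = p₀ := hgC.localInverse_apply_image hgd hn12
    have hgp₀ : g p₀ = (x₀, c) := by
      rw [hgdef]; simp only; rw [hφ₀eq]
    have hright : ∀ᶠ z in nhds (g p₀), g (ginv z) = z := by
      rw [hginv_eq]
      exact hs.eventually_right_inverse
    set ψ : E → F := fun x => (ginv (x, c)).2 with hψdef
    have hmk : ContDiffAt ℝ 2 (fun x : E => (x, c)) x₀ := contDiffAt_id.prodMk contDiffAt_const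
    have hginvC' : ContDiffAt ℝ 2 ginv (x₀, c) := by rwa [hgp₀] at hginvC
    have hψC : ContDiffAt ℝ 2 ψ x₀ := contDiffAt_snd.comp x₀ (hginvC'.comp x₀ hmk)
    have hψx₀ : ψ x₀ = φ x₀ := by
      rw [hψdef]; simp only
      rw [← hgp₀, happ]
    have htend : Filter.Tendsto (fun x : E => (x, c)) (nhds x₀) (nhds (g p₀)) := by
      rw [hgp₀]
      exact (continuous_id.prodMk continuous_const).tendsto x₀
    have hev1 : ∀ᶠ x in nhds x₀, g (ginv (x, c)) = (x, c) := htend.eventually hright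
    have hev2 : ∀ᶠ x in nhds x₀, ψ x ∈ ball b r :=
      hψC.continuousAt.eventually_mem (isOpen_ball.mem_nhds (by rw [hψx₀]; exact hφ₀ball))
    have hev3 : ∀ᶠ x in nhds x₀, x ∈ ball a r := isOpen_ball.eventually_mem hx₀r
    have hkey : ∀ᶠ x in nhds x₀, x ∈ V ∧ φ x = ψ x := by
      filter_upwards [hev1, hev2, hev3] with x h1 h2 h3
      have h5 : (ginv (x, c)).1 = x := congrArg Prod.fst h1
      have h6 : f (ginv (x, c)) = c := congrArg Prod.snd h1
      have h7 : ginv (x, c) = (x, ψ x) := by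
        rw [hψdef]; exact Prod.ext h5 rfl
      have hfx : f (x, ψ x) = c := by rw [← h7]; exact h6
      have hxV : x ∈ V := ⟨h3, ψ x, h2, hfx⟩
      refine ⟨hxV, ?_⟩
      exact huniq x h3 (φ x) (hφspec x hxV).1 (ψ x) h2 (hφspec x hxV).2 hfx
    exact ⟨hkey.mono fun x h => h.1, hψC.congr_of_eventuallyEq (hkey.mono fun x h => h.2)⟩
  refine ⟨hUsub, V, φ, ?_, hρV, hVsub, ?_, ?_, ?_⟩
  · rw [isOpen_iff_eventually]
    intro x hx
    exact (hloc x hx).1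
  · exact fun x hx => ((hloc x hx).2).contDiffWithinAt
  · intro x y _
    constructor
    · rintro ⟨hmem, hfeq⟩
      rw [Set.mem_prod] at hmem
      have hxV : x ∈ V := ⟨hmem.1, y, hmem.2, hfeq⟩
      exact ⟨hxV, huniq x hmem.1 y hmem.2 (φ x) (hφspec x hxV).1 hfeq (hφspec x hxV).2⟩
    · rintro ⟨hxV, rfl⟩
      exact ⟨Set.mem_prod.mpr ⟨hVsub hxV, (hφspec x hxV).1⟩, (hφspec x hxV).2⟩
  · intro x hx
    have hxr : x ∈ ball a r := hVsub hx
    obtain ⟨hφball, hφeq⟩ := hφspec x hx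
    have hpO : (x, φ x) ∈ O := hsO (hprodmem hxr hφball)
    obtain ⟨e₂, he₂⟩ := hiso (x, φ x) hpO
    refine ⟨e₂, he₂, ?_⟩
    have hφdiff : DifferentiableAt ℝ φ x := ((hloc x hx).2).differentiableAt two_ne_zero
    have hfd := (hfdAt (x, φ x) hpO).hasFDerivAt
    have hin : HasFDerivAt (fun x' => (x', φ x'))
        ((ContinuousLinearMap.id ℝ E).prod (fderiv ℝ φ x)) x :=
      (hasFDerivAt_id x).prodMk hφdiff.hasFDerivAt
    have hcomp : HasFDerivAt (fun x' => f (x', φ x'))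
        ((fderiv ℝ f (x, φ x)).comp ((ContinuousLinearMap.id ℝ E).prod (fderiv ℝ φ x))) x :=
      hfd.comp x hin
    have hconst : (fun x' => f (x', φ x')) =ᶠ[nhds x] fun _ => c := by
      filter_upwards [(hloc x hx).1] with x' hx'
      exact (hφspec x' hx').2
    have hzero : (fderiv ℝ f (x, φ x)).comp
        ((ContinuousLinearMap.id ℝ E).prod (fderiv ℝ φ x)) = 0 := by
      rw [← hcomp.fderiv, hconst.fderiv_eq, fderiv_const_apply]
    apply ContinuousLinearMap.ext
    intro u
    have h1 : fderiv ℝ f (x, φ x) (u, fderiv ℝ φ x u) = 0 := by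
      have h0 := congrArg (fun T : E →L[ℝ] G => T u) hzero
      simpa using h0
    have hpart1 : fderiv ℝ (fun x' => f (x', φ x)) x
        = (fderiv ℝ f (x, φ x)).comp (inl ℝ E F) :=
      TFIU_partial1 (hfdAt _ hpO)
    have h2 : e₂ ((fderiv ℝ φ x) u) = fderiv ℝ f (x, φ x) (0, fderiv ℝ φ x u) := by
      rw [← ContinuousLinearEquiv.coe_coe, he₂, TFIU_partial2 (hfdAt _ hpO)]; rfl
    have h3 : fderiv ℝ f (x, φ x) (u, 0)
        + fderiv ℝ f (x, φ x) (0, fderiv ℝ φ x u) = 0 := by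
      rw [← map_add]
      convert h1 using 2
      simp
    show fderiv ℝ φ x u
        = (-((e₂.symm : G →L[ℝ] F).comp (fderiv ℝ (fun x' => f (x', φ x)) x))) u
    rw [ContinuousLinearMap.neg_apply, ContinuousLinearMap.comp_apply, hpart1]
    have h4 : ((fderiv ℝ f (x, φ x)).comp (inl ℝ E F)) u = fderiv ℝ f (x, φ x) (u, 0) := rfl
    rw [h4]
    have h5 : fderiv ℝ f (x, φ x) (u, 0) = -(e₂ ((fderiv ℝ φ x) u)) := by
      rw [h2]
      exact eq_neg_of_add_eq_zero_left h3
    rw [h5]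
    simp
end

section
/- Let M¹ > 0 satisfy ‖DΦ₀(u)‖ ≤ M¹ (operator norm of the differential) for all u ∈ [−L, L]^k, and let M_Γ ≥ ‖Γ‖ (operator norm). Let θ ∈ ℝ, let j ≠ j′ be integers, and let x, x′ ∈ Ω satisfy θ + Φ₀(Γx) = (2j−1)L and θ + Φ₀(Γx′) = (2j′−1)L. Then ‖x − x′‖ ≥ 2L/(M¹·M_Γ). Consequently, if ε₀ < L/(2·M¹·M_Γ), then no open ball of radius ε₀ can intersect both the ε₀-neighbourhood of Σ_j^θ = { x ∈ Ω : θ + Φ₀(Γx) = (2j−1)L } and the ε₀-neighbourhood of Σ_{j′}^θ. (Lemma 'dist-front': separation of the slanted boundaries.) -/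
open MeasureTheory Metric

/-- **Lemma `dist-front`.** If `θ + Φ₀(Γx) = (2j−1)L` and `θ + Φ₀(Γx′) = (2j′−1)L` with
`j ≠ j′` and `x, x′ ∈ Ω`, then `‖x − x′‖ ≥ 2L/(M¹·M_Γ)`; consequently, if
`ε₀ < L/(2M¹M_Γ)`, no open ball of radius `ε₀` can meet both the `ε₀`-neighbourhood of
`Σ_j^θ` and the `ε₀`-neighbourhood of `Σ_{j′}^θ`. -/
theorem dist_front (k : ℕ) (hk : 2 ≤ k)
    (L β σ C₁ C₂ : ℝ)
    (hL : 0 < L) (hβ : 0 < β) (hσ : 1 < σ) (hC₁ : 1 < C₁) (hC₂ : 1 < C₂)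
    (γ : ℝ) (hγ : γ = (C₁ * σ) ^ (-(1 : ℝ) / 2))
    (Φ₀ : EuclideanSpace ℝ (Fin k) → ℝ)
    (cube : Set (EuclideanSpace ℝ (Fin k)))
    (hcube : cube = {x | ∀ j : Fin k, -(L + β) < x j ∧ x j < L + β})
    (hΦ : ContDiffOn ℝ 2 Φ₀ cube)
    (Γ : EuclideanSpace ℝ (Fin k) →L[ℝ] EuclideanSpace ℝ (Fin k))
    (hΓ : ∀ x (j : Fin k), Γ x j = γ ^ (-((j : ℕ) : ℤ)) * x j)
    (Ω : Set (EuclideanSpace ℝ (Fin k)))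
    (hΩ : Ω = {u | ∀ j : Fin k, |u j| ≤ γ ^ (j : ℕ) * L})
    (M1 MΓ : ℝ) (hM1pos : 0 < M1) (hMΓpos : 0 < MΓ)
    (hM1 : ∀ u : EuclideanSpace ℝ (Fin k), (∀ j : Fin k, |u j| ≤ L) →
      ‖fderiv ℝ Φ₀ u‖ ≤ M1)
    (hMΓ : ‖Γ‖ ≤ MΓ)
    (θ : ℝ) (j j' : ℤ) (hjj' : j ≠ j')
    (Sig : ℤ → Set (EuclideanSpace ℝ (Fin k)))
    (hSig : ∀ i : ℤ, Sig i = {z | z ∈ Ω ∧ θ + Φ₀ (Γ z) = (2 * (i : ℝ) - 1) * L})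
    (x x' : EuclideanSpace ℝ (Fin k)) (hx : x ∈ Ω) (hx' : x' ∈ Ω)
    (hxeq : θ + Φ₀ (Γ x) = (2 * (j : ℝ) - 1) * L)
    (hx'eq : θ + Φ₀ (Γ x') = (2 * (j' : ℝ) - 1) * L) :
    2 * L / (M1 * MΓ) ≤ ‖x - x'‖ ∧
    ∀ ε₀ : ℝ, 0 < ε₀ → ε₀ < L / (2 * M1 * MΓ) →
      ∀ c : EuclideanSpace ℝ (Fin k),
        ¬((ball c ε₀ ∩ Metric.thickening ε₀ (Sig j)).Nonempty ∧
          (ball c ε₀ ∩ Metric.thickening ε₀ (Sig j')).Nonempty) := by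
  have hγpos : 0 < γ := by
    rw [hγ]
    exact Real.rpow_pos_of_pos (by nlinarith) _
  -- the set S = [-L, L]^k (coordinatewise)
  set S : Set (EuclideanSpace ℝ (Fin k)) := {u | ∀ i : Fin k, |u i| ≤ L} with hS
  have hSconv : Convex ℝ S := by
    intro u hu v hv a b ha hb hab i
    have : (a • u + b • v) i = a * u i + b * v i := by
      simp [PiLp.add_apply, PiLp.smul_apply, smul_eq_mul]
    rw [this]
    calc |a * u i + b * v i| ≤ |a * u i| + |b * v i| := abs_add_le _ _
      _ = a * |u i| + b * |v i| := by
          rw [abs_mul, abs_mul, abs_of_nonneg ha, abs_of_nonneg hb]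
      _ ≤ a * L + b * L := by
          gcongr
          exacts [hu i, hv i]
      _ = L := by rw [← add_mul, hab, one_mul]
  have hcubeopen : IsOpen cube := by
    rw [hcube]
    have : {x : EuclideanSpace ℝ (Fin k) | ∀ i : Fin k, -(L + β) < x i ∧ x i < L + β}
        = ⋂ i : Fin k, (EuclideanSpace.proj (𝕜 := ℝ) i) ⁻¹' Set.Ioo (-(L + β)) (L + β) := by
      ext u; simp [Set.mem_iInter, Set.mem_Ioo]
    rw [this]
    exact isOpen_iInter_of_finite fun i =>
      isOpen_Ioo.preimage (EuclideanSpace.proj i).continuous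
  have hScube : S ⊆ cube := by
    intro u hu
    rw [hcube]
    intro i
    have := hu i
    rw [abs_le] at this
    constructor <;> [linarith [this.1]; linarith [this.2]]
  have hdiff : ∀ u ∈ S, DifferentiableAt ℝ Φ₀ u := fun u hu =>
    (hΦ.contDiffAt (hcubeopen.mem_nhds (hScube hu))).differentiableAt (by norm_num)
  have hΓmem : ∀ z ∈ Ω, Γ z ∈ S := by
    intro z hz i
    rw [hΩ] at hz
    have hz1 := hz i
    rw [hΓ]
    rw [abs_mul, abs_of_nonneg (le_of_lt (zpow_pos hγpos _))]
    calc γ ^ (-((i : ℕ) : ℤ)) * |z i| ≤ γ ^ (-((i : ℕ) : ℤ)) * (γ ^ (i : ℕ) * L) := by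
          gcongr
      _ = (γ ^ (-((i : ℕ) : ℤ)) * γ ^ ((i : ℕ) : ℤ)) * L := by
          rw [zpow_natCast]; ring
      _ = L := by
          rw [← zpow_add₀ (ne_of_gt hγpos)]
          simp
  -- key separation estimate
  have key : ∀ p q : EuclideanSpace ℝ (Fin k), p ∈ Ω → q ∈ Ω →
      θ + Φ₀ (Γ p) = (2 * (j : ℝ) - 1) * L → θ + Φ₀ (Γ q) = (2 * (j' : ℝ) - 1) * L →
      2 * L / (M1 * MΓ) ≤ ‖p - q‖ := by
    intro p q hp hq hpe hqe
    have hmv : ‖Φ₀ (Γ p) - Φ₀ (Γ q)‖ ≤ M1 * ‖Γ p - Γ q‖ := by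
      exact hSconv.norm_image_sub_le_of_norm_fderiv_le hdiff
        (fun u hu => hM1 u hu) (hΓmem q hq) (hΓmem p hp)
    have hΓlip : ‖Γ p - Γ q‖ ≤ MΓ * ‖p - q‖ := by
      calc ‖Γ p - Γ q‖ = ‖Γ (p - q)‖ := by rw [map_sub]
        _ ≤ ‖Γ‖ * ‖p - q‖ := Γ.le_opNorm _
        _ ≤ MΓ * ‖p - q‖ := by gcongr
    have hjj : (1 : ℝ) ≤ |(j : ℝ) - (j' : ℝ)| := by
      exact_mod_cast Int.one_le_abs (sub_ne_zero.mpr hjj')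
    have hlow : 2 * L ≤ ‖Φ₀ (Γ p) - Φ₀ (Γ q)‖ := by
      have : Φ₀ (Γ p) - Φ₀ (Γ q) = 2 * ((j : ℝ) - (j' : ℝ)) * L := by
        have := hpe
        have := hqe
        nlinarith [hpe, hqe]
      rw [this, Real.norm_eq_abs, abs_mul, abs_mul, abs_of_nonneg hL.le]
      have : |(2 : ℝ)| = 2 := by norm_num
      rw [this]
      nlinarith
    have hchain : 2 * L ≤ M1 * MΓ * ‖p - q‖ := by
      calc 2 * L ≤ ‖Φ₀ (Γ p) - Φ₀ (Γ q)‖ := hlow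
        _ ≤ M1 * ‖Γ p - Γ q‖ := hmv
        _ ≤ M1 * (MΓ * ‖p - q‖) := by gcongr
        _ = M1 * MΓ * ‖p - q‖ := by ring
    rw [div_le_iff₀ (by positivity)]
    linarith
  refine ⟨key x x' hx hx' hxeq hx'eq, ?_⟩
  intro ε₀ hε₀ hε₀' c ⟨⟨a, ha, haT⟩, ⟨b, hb, hbT⟩⟩
  obtain ⟨p, hpS, hap⟩ := Metric.mem_thickening_iff.mp haT
  obtain ⟨q, hqS, hbq⟩ := Metric.mem_thickening_iff.mp hbT
  rw [hSig] at hpS hqS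
  have hkey := key p q hpS.1 hqS.1 hpS.2 hqS.2
  have hdist : dist p q < 4 * ε₀ := by
    have h4 := dist_triangle4 p a b q
    have h5 : dist a b ≤ dist a c + dist c b := dist_triangle a c b
    have h1 : dist p a < ε₀ := by rw [dist_comm]; exact hap
    have h2 : dist a c < ε₀ := mem_ball.mp ha
    have h3 : dist c b < ε₀ := by rw [dist_comm]; exact mem_ball.mp hb
    have h6 : dist b q < ε₀ := hbq
    linarith
  have hnorm : ‖p - q‖ = dist p q := (dist_eq_norm p q).symm
  have : 4 * ε₀ < 2 * L / (M1 * MΓ) := by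
    rw [lt_div_iff₀ (by positivity)] at hε₀' ⊢
    ring_nf at hε₀' ⊢
    nlinarith
  linarith [hkey, hnorm ▸ hkey]
end

section
/- For every ε > 0, the map from ℝ^k × ℝ to [0, ∞] sending (x, θ) to osc(g(·, θ), B_ε(x)) := esssup over (y, z) ∈ B_ε(x) × B_ε(x) (with respect to the Lebesgue measure on ℝ^k × ℝ^k) of |g(y, θ) − g(z, θ)| is measurable. (Lemma 'measur_osc': measurability of the oscillation over balls of a jointly measurable family.) -/
open MeasureTheory

lemma essSup_eq_iSup_rat {α : Type*} [MeasurableSpace α] (μ : Measure α) (f : α → ENNReal) :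
    essSup f μ = ⨆ r : ℚ,
      if 0 < μ {x | ENNReal.ofReal r < f x} then ENNReal.ofReal r else 0 := by
  apply le_antisymm
  · refine le_of_forall_lt fun c hc => ?_
    obtain ⟨q, _, h1, h2⟩ := ENNReal.lt_iff_exists_rat_btwn.mp hc
    have hq : (Real.toNNReal q : ENNReal) = ENNReal.ofReal q := rfl
    rw [hq] at h1 h2
    have hpos : 0 < μ {x | ENNReal.ofReal q < f x} := by
      rcases eq_or_lt_of_le (zero_le : (0 : ENNReal) ≤ μ {x | ENNReal.ofReal q < f x}) with h | h
      · exfalso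
        have : essSup f μ ≤ ENNReal.ofReal q := by
          refine essSup_le_of_ae_le _ ?_
          have : μ {x | ¬ f x ≤ ENNReal.ofReal q} = 0 := by
            simpa [not_le] using h.symm
          exact this
        exact absurd (h2.trans_le this) (lt_irrefl _)
      · exact h
    calc c < ENNReal.ofReal q := h1
      _ = (if 0 < μ {x | ENNReal.ofReal q < f x} then ENNReal.ofReal q else 0) := by
          rw [if_pos hpos]
      _ ≤ _ := le_iSup (fun r : ℚ =>
          if 0 < μ {x | ENNReal.ofReal r < f x} then ENNReal.ofReal r else 0) q
  · refine iSup_le fun r => ?_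
    split_ifs with h
    · by_contra hlt
      push_neg at hlt
      have hsub : {x | ENNReal.ofReal r < f x} ⊆ {x | essSup f μ < f x} :=
        fun x hx => lt_of_le_of_lt hlt.le hx
      have h0 : μ {x | essSup f μ < f x} = 0 := by
        have h' := ENNReal.ae_le_essSup (μ := μ) f
        rw [ae_iff] at h'
        simpa [not_le] using h'
      exact absurd (lt_of_lt_of_le h (measure_mono hsub)) (by simp [h0])
    · exact zero_le

/-- **Lemma `measur_osc`.** For a jointly measurable `g : ℝ^k × ℝ → ℝ` and `ε > 0`,
the map `(x, θ) ↦ osc(g(·, θ), B_ε(x))`, where the oscillation is the essential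
supremum (for the Lebesgue measure on `ℝ^k × ℝ^k`) of `|g(y, θ) − g(z, θ)|` over
`(y, z) ∈ B_ε(x) × B_ε(x)`, with values in `[0, ∞]`, is measurable. -/
theorem measur_osc (k : ℕ) (hk : 1 ≤ k)
    (g : EuclideanSpace ℝ (Fin k) × ℝ → ℝ) (hg : Measurable g)
    (ε : ℝ) (hε : 0 < ε) :
    Measurable (fun q : EuclideanSpace ℝ (Fin k) × ℝ =>
      essSup
        (fun p : EuclideanSpace ℝ (Fin k) × EuclideanSpace ℝ (Fin k) =>
          ENNReal.ofReal |g (p.1, q.2) - g (p.2, q.2)|)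
        ((volume : Measure (EuclideanSpace ℝ (Fin k) × EuclideanSpace ℝ (Fin k))).restrict
          (Metric.ball q.1 ε ×ˢ Metric.ball q.1 ε))) := by
  let E := EuclideanSpace ℝ (Fin k)
  set μ₀ : Measure (E × E) :=
    (volume : Measure (E × E)).restrict (Metric.ball (0 : E) ε ×ˢ Metric.ball (0 : E) ε) with hμ₀
  -- translation step
  have trans : ∀ (v : E) (θ : ℝ),
      essSup (fun p : E × E => ENNReal.ofReal |g (p.1, θ) - g (p.2, θ)|)
        ((volume : Measure (E × E)).restrict (Metric.ball v ε ×ˢ Metric.ball v ε))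
      = essSup (fun p : E × E => ENNReal.ofReal |g (p.1 + v, θ) - g (p.2 + v, θ)|) μ₀ := by
    intro v θ
    set T : E × E → E × E := fun p => (p.1 + v, p.2 + v) with hT
    have h1 : MeasurePreserving (fun x : E => x + v) volume volume :=
      measurePreserving_add_right volume v
    have hTmp : MeasurePreserving T
        ((volume : Measure E).prod (volume : Measure E))
        ((volume : Measure E).prod (volume : Measure E)) := h1.prod h1
    have hTvol : MeasurePreserving T (volume : Measure (E × E)) volume := by
      rw [Measure.volume_eq_prod]; exact hTmp
    have hpre : T ⁻¹' (Metric.ball v ε ×ˢ Metric.ball v ε)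
        = Metric.ball (0 : E) ε ×ˢ Metric.ball (0 : E) ε := by
      ext p
      simp [T, Set.mem_prod, Metric.mem_ball, dist_eq_norm, add_sub_cancel_right]
      exact and_congr (by rw [dist_eq_norm (p.1 + v) v, add_sub_cancel_right]) (by rw [dist_eq_norm (p.2 + v) v, add_sub_cancel_right])
    have hf : Measurable (fun p : E × E => ENNReal.ofReal |g (p.1, θ) - g (p.2, θ)|) := by
      fun_prop
    have hball : MeasurableSet (Metric.ball v ε ×ˢ Metric.ball v ε) :=
      (Metric.isOpen_ball.prod Metric.isOpen_ball).measurableSet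
    calc essSup (fun p : E × E => ENNReal.ofReal |g (p.1, θ) - g (p.2, θ)|)
          ((volume : Measure (E × E)).restrict (Metric.ball v ε ×ˢ Metric.ball v ε))
        = essSup (fun p : E × E => ENNReal.ofReal |g (p.1, θ) - g (p.2, θ)|)
          ((Measure.map T volume).restrict (Metric.ball v ε ×ˢ Metric.ball v ε)) := by
          rw [hTvol.map_eq]
      _ = essSup (fun p : E × E => ENNReal.ofReal |g (p.1, θ) - g (p.2, θ)|)
          (Measure.map T μ₀) := by
          rw [Measure.restrict_map hTvol.measurable hball, hpre]
      _ = essSup ((fun p : E × E => ENNReal.ofReal |g (p.1, θ) - g (p.2, θ)|) ∘ T) μ₀ :=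
          essSup_map_measure hf.aemeasurable hTvol.measurable.aemeasurable
      _ = essSup (fun p : E × E => ENNReal.ofReal |g (p.1 + v, θ) - g (p.2 + v, θ)|) μ₀ := rfl
  have key : (fun q : E × ℝ =>
      essSup (fun p : E × E => ENNReal.ofReal |g (p.1, q.2) - g (p.2, q.2)|)
        ((volume : Measure (E × E)).restrict (Metric.ball q.1 ε ×ˢ Metric.ball q.1 ε)))
      = fun q : E × ℝ => ⨆ r : ℚ,
        if 0 < μ₀ {p : E × E |
            ENNReal.ofReal r < ENNReal.ofReal |g (p.1 + q.1, q.2) - g (p.2 + q.1, q.2)|}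
        then ENNReal.ofReal r else 0 := by
    funext q
    rw [trans q.1 q.2, essSup_eq_iSup_rat]
  rw [key]
  apply Measurable.iSup
  intro r
  have hS : MeasurableSet {z : (E × ℝ) × (E × E) |
      ENNReal.ofReal r < ENNReal.ofReal |g (z.2.1 + z.1.1, z.1.2) - g (z.2.2 + z.1.1, z.1.2)|} := by
    apply measurableSet_lt measurable_const
    apply ENNReal.measurable_ofReal.comp
    have m1 : Measurable fun z : (E × ℝ) × (E × E) => (z.2.1 + z.1.1, z.1.2) :=
      (measurable_snd.fst.add measurable_fst.fst).prodMk measurable_fst.snd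
    have m2 : Measurable fun z : (E × ℝ) × (E × E) => (z.2.2 + z.1.1, z.1.2) :=
      (measurable_snd.snd.add measurable_fst.fst).prodMk measurable_fst.snd
    exact ((hg.comp m1).sub (hg.comp m2)).abs
  have hm : Measurable fun q : E × ℝ => μ₀ {p : E × E |
      ENNReal.ofReal r < ENNReal.ofReal |g (p.1 + q.1, q.2) - g (p.2 + q.1, q.2)|} :=
    measurable_measure_prodMk_left hS
  exact Measurable.ite (hm measurableSet_Ioi) measurable_const measurable_const
end

section
/- The map y ∈ Y ↦ esssup_{x ∈ A} g(x, y) is measurable, and esssup_{x ∈ A} ( ∫_Y g(x, y) dμ_Y(y) ) ≤ ∫_Y ( esssup_{x ∈ A} g(x, y) ) dμ_Y(y). (The essential-supremum/integral exchange inequality (ineg_supess_int).) -/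
open MeasureTheory

open scoped ENNReal

/-- On any measure space, the essential supremum of an `ℝ≥0∞`-valued function can be
computed as a countable infimum over rationals. -/
lemma essSup_eq_iInf_rat {α : Type*} [MeasurableSpace α] (ν : Measure α) (h : α → ℝ≥0∞) :
    essSup h ν = ⨅ q : ℚ,
      if ν {x | ENNReal.ofReal q < h x} = 0 then (ENNReal.ofReal q : ℝ≥0∞) else ∞ := by
  rw [essSup_eq_sInf]
  apply le_antisymm
  · refine le_iInf fun q => ?_
    split_ifs with hq
    · exact sInf_le hq
    · exact le_top
  · refine le_sInf fun a ha => ?_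
    rcases eq_top_or_lt_top a with rfl | halt
    · exact le_top
    refine ENNReal.le_of_forall_pos_le_add fun ε hε _ => ?_
    have htop : a + ε ≠ ∞ := (ENNReal.add_lt_top.mpr ⟨halt, ENNReal.coe_lt_top⟩).ne
    have hlt : a.toReal < (a + ε).toReal := by
      refine (ENNReal.toReal_lt_toReal halt.ne htop).mpr ?_
      exact ENNReal.lt_add_right halt.ne (by exact_mod_cast hε.ne')
    obtain ⟨q, hq1, hq2⟩ := exists_rat_btwn hlt
    have haq : a ≤ ENNReal.ofReal q := by
      rw [← ENNReal.ofReal_toReal halt.ne]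
      exact ENNReal.ofReal_le_ofReal hq1.le
    have hzero : ν {x | ENNReal.ofReal q < h x} = 0 := by
      refine measure_mono_null (fun x hx => ?_) ha
      exact lt_of_le_of_lt haq hx
    calc (⨅ q : ℚ, if ν {x | ENNReal.ofReal q < h x} = 0
            then (ENNReal.ofReal q : ℝ≥0∞) else ∞)
        ≤ ENNReal.ofReal q := by
          refine iInf_le_of_le q ?_
          rw [if_pos hzero]
      _ ≤ a + ε := by
          rw [← ENNReal.ofReal_toReal htop]
          exact ENNReal.ofReal_le_ofReal hq2.le

/-- **Inequality (ineg_supess_int).** For σ-finite measure spaces, a nonnegative,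
integrable, essentially bounded jointly measurable `g` on `X × Y`, and `A ∈ 𝒯_X` with
`μ_X(A) > 0`: the map `y ↦ esssup_{x ∈ A} g(x, y)` is measurable and
`esssup_{x ∈ A} ∫_Y g(x, y) dμ_Y ≤ ∫_Y esssup_{x ∈ A} g(x, y) dμ_Y`. -/
theorem ineg_supess_int {X Y : Type*} [MeasurableSpace X] [MeasurableSpace Y]
    (μX : Measure X) (μY : Measure Y) [SigmaFinite μX] [SigmaFinite μY]
    (g : X × Y → ℝ) (hgmeas : Measurable g) (hg0 : ∀ p, 0 ≤ g p)
    (hgint : Integrable g (μX.prod μY))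
    (C : ℝ) (hgbdd : ∀ᵐ p ∂(μX.prod μY), g p ≤ C)
    (A : Set X) (hA : MeasurableSet A) (hApos : 0 < μX A) :
    Measurable (fun y => essSup (fun x => ENNReal.ofReal (g (x, y))) (μX.restrict A)) ∧
    essSup (fun x => ∫⁻ y, ENNReal.ofReal (g (x, y)) ∂μY) (μX.restrict A)
      ≤ ∫⁻ y, essSup (fun x => ENNReal.ofReal (g (x, y))) (μX.restrict A) ∂μY := by
  set ν : Measure X := μX.restrict A with hν
  have hh : Measurable fun p : X × Y => ENNReal.ofReal (g p) :=
    hgmeas.ennreal_ofReal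
  -- measurability of the essential supremum in `y`
  have hmeas : Measurable
      (fun y => essSup (fun x => ENNReal.ofReal (g (x, y))) ν) := by
    have : (fun y => essSup (fun x => ENNReal.ofReal (g (x, y))) ν)
        = fun y => ⨅ q : ℚ,
          if ν {x | ENNReal.ofReal q < ENNReal.ofReal (g (x, y))} = 0
            then (ENNReal.ofReal q : ℝ≥0∞) else ∞ := by
      funext y
      exact essSup_eq_iInf_rat ν _
    rw [this]
    refine Measurable.iInf fun q => ?_
    have hs : MeasurableSet {p : X × Y | ENNReal.ofReal q < ENNReal.ofReal (g p)} :=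
      measurableSet_lt measurable_const hh
    have hm : Measurable fun y =>
        ν ((fun x => (x, y)) ⁻¹' {p : X × Y | ENNReal.ofReal q < ENNReal.ofReal (g p)}) :=
      measurable_measure_prodMk_right hs
    have : Measurable fun y =>
        (if ν {x | ENNReal.ofReal q < ENNReal.ofReal (g (x, y))} = 0
          then (ENNReal.ofReal q : ℝ≥0∞) else ∞) := by
      refine Measurable.ite ?_ measurable_const measurable_const
      exact hm (measurableSet_singleton 0)
    exact this
  refine ⟨hmeas, ?_⟩
  -- the key pointwise bound via Fubini
  set S : Y → ℝ≥0∞ := fun y => essSup (fun x => ENNReal.ofReal (g (x, y))) ν with hS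
  have hpmeas : MeasurableSet {p : X × Y | ENNReal.ofReal (g (p.1, p.2)) ≤ S p.2} := by
    have : Measurable fun p : X × Y => S p.2 := hmeas.comp measurable_snd
    exact measurableSet_le (by simpa using hh) this
  have hae : ∀ᵐ x ∂ν, ∀ᵐ y ∂μY, ENNReal.ofReal (g (x, y)) ≤ S y := by
    rw [MeasureTheory.Measure.ae_ae_comm hpmeas]
    refine Filter.Eventually.of_forall fun y => ?_
    exact ae_le_essSup
  have hbound : ∀ᵐ x ∂ν, (∫⁻ y, ENNReal.ofReal (g (x, y)) ∂μY) ≤ ∫⁻ y, S y ∂μY := by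
    filter_upwards [hae] with x hx
    exact lintegral_mono_ae hx
  exact essSup_le_of_ae_le _ hbound
end

section
/- The product measure ν^(⊗ℕ) ⊗ μ on ℝ^ℕ × Ω, where μ is the measure with density h with respect to m, is invariant under the skew-product map F : ℝ^ℕ × Ω → ℝ^ℕ × Ω defined by F(ϑ, x) = (𝒮ϑ, T_{ϑ₀}(x)), where 𝒮 is the left shift on ℝ^ℕ and ϑ₀ is the first coordinate of ϑ; i.e. (ν^(⊗ℕ) ⊗ μ)(F^(−1)(C)) = (ν^(⊗ℕ) ⊗ μ)(C) for every measurable C ⊆ ℝ^ℕ × Ω. (The invariance assertion of Theorem 'th-inv-meas'.) -/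
open MeasureTheory

namespace SkewAux

/-- Finite-dimensional boxes (cylinders with box bases) in `ℕ → ℝ`. -/
def boxes : Set (Set (ℕ → ℝ)) :=
  {S | ∃ (s : Finset ℕ) (A : ℕ → Set ℝ), (∀ i, MeasurableSet (A i)) ∧
    S = {ϑ | ∀ i ∈ s, ϑ i ∈ A i}}

lemma measurableSet_box {s : Finset ℕ} {A : ℕ → Set ℝ} (hA : ∀ i, MeasurableSet (A i)) :
    MeasurableSet {ϑ : ℕ → ℝ | ∀ i ∈ s, ϑ i ∈ A i} := by
  have : {ϑ : ℕ → ℝ | ∀ i ∈ s, ϑ i ∈ A i} = ⋂ i ∈ (s : Set ℕ), (fun ϑ => ϑ i) ⁻¹' A i := by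
    ext ϑ; simp
  rw [this]
  exact MeasurableSet.biInter s.countable_toSet fun i _ => measurable_pi_apply i (hA i)

lemma isPiSystem_boxes : IsPiSystem boxes := by
  rintro _ ⟨s, A, hA, rfl⟩ _ ⟨t, B, hB, rfl⟩ -
  refine ⟨s ∪ t, fun i => (if i ∈ s then A i else Set.univ) ∩ (if i ∈ t then B i else Set.univ),
    ?_, ?_⟩
  · intro i
    refine MeasurableSet.inter ?_ ?_ <;> split_ifs <;>
      first | exact hA _ | exact hB _ | exact MeasurableSet.univ
  · ext ϑ
    simp only [Set.mem_inter_iff, Set.mem_setOf_eq, Finset.mem_union]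
    constructor
    · rintro ⟨h1, h2⟩ i hi
      constructor
      · split_ifs with hh
        · exact h1 i hh
        · trivial
      · split_ifs with hh
        · exact h2 i hh
        · trivial
    · intro H
      constructor
      · intro i hi
        have := (H i (Or.inl hi)).1
        rwa [if_pos hi] at this
      · intro i hi
        have := (H i (Or.inr hi)).2
        rwa [if_pos hi] at this

lemma univ_mem_boxes : Set.univ ∈ boxes :=
  ⟨∅, fun _ => Set.univ, fun _ => MeasurableSet.univ, by simp⟩

lemma isCountablySpanning_boxes : IsCountablySpanning boxes :=
  ⟨fun _ => Set.univ, fun _ => univ_mem_boxes, Set.iUnion_const _⟩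

lemma generateFrom_boxes :
    MeasurableSpace.generateFrom boxes = (inferInstance : MeasurableSpace (ℕ → ℝ)) := by
  apply le_antisymm
  · apply MeasurableSpace.generateFrom_le
    rintro _ ⟨s, A, hA, rfl⟩
    exact measurableSet_box hA
  · show MeasurableSpace.pi ≤ _
    rw [MeasurableSpace.pi]
    refine iSup_le fun i => ?_
    rw [← measurable_iff_comap_le]
    intro A hA
    exact MeasurableSpace.measurableSet_generateFrom
      ⟨{i}, fun _ => A, fun _ => hA, by ext ϑ; simp⟩

end SkewAux

open SkewAux

/-- **Invariance assertion of Theorem `th-inv-meas`.** If `h` is a density fixed (in the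
averaged sense) by the family of transfer operators `P_θ`, then the product measure
`ν^{⊗ℕ} ⊗ μ`, where `μ = h·m`, is invariant under the skew product
`F(ϑ, x) = (𝒮ϑ, T_{ϑ₀}(x))`. -/
theorem skew_product_invariance {Ω : Type*} [MeasurableSpace Ω] (m : Measure Ω)
    [SigmaFinite m]
    (ν : Measure ℝ) [IsProbabilityMeasure ν]
    (T : ℝ → Ω → Ω) (hT : Measurable (fun p : ℝ × Ω => T p.1 p.2))
    (Pθ : ℝ → (Ω → ℝ) → (Ω → ℝ))
    (htrans : ∀ θ f, Integrable f m →
      Integrable (Pθ θ f) m ∧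
      ∀ A : Set Ω, MeasurableSet A →
        ∫ x in T θ ⁻¹' A, f x ∂m = ∫ x in A, Pθ θ f x ∂m)
    (h : Ω → ℝ) (hmeas : Measurable h) (hpos : 0 ≤ h) (hint : Integrable h m)
    (hnorm : ∫ x, h x ∂m = 1)
    (Qh : Ω × ℝ → ℝ) (hQmeas : Measurable Qh)
    (hQ : ∀ θ : ℝ, (fun y => Qh (y, θ)) =ᵐ[m] Pθ θ h)
    (hfix : ∀ᵐ y ∂m, ∫ θ, Qh (y, θ) ∂ν = h y)
    (νN : Measure (ℕ → ℝ))
    (hνN : ∀ (s : Finset ℕ) (A : ℕ → Set ℝ), (∀ i, MeasurableSet (A i)) →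
      νN {ϑ | ∀ i ∈ s, ϑ i ∈ A i} = ∏ i ∈ s, ν (A i))
    (μ : Measure Ω) (hμ : μ = m.withDensity fun x => ENNReal.ofReal (h x))
    (F : (ℕ → ℝ) × Ω → (ℕ → ℝ) × Ω)
    (hF : ∀ ϑ x, F (ϑ, x) = (fun n => ϑ (n + 1), T (ϑ 0) x)) :
    ∀ C : Set ((ℕ → ℝ) × Ω), MeasurableSet C →
      (νN.prod μ) (F ⁻¹' C) = (νN.prod μ) C := by
  subst hμ
  set μ := m.withDensity fun x => ENNReal.ofReal (h x) with hμdef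
  -- basic instances
  have hνNuniv : νN Set.univ = 1 := by
    have := hνN ∅ (fun _ => Set.univ) (fun _ => MeasurableSet.univ)
    simpa using this
  haveI : IsProbabilityMeasure νN := ⟨hνNuniv⟩
  have hμuniv : μ Set.univ = 1 := by
    rw [hμdef, withDensity_apply _ MeasurableSet.univ, Measure.restrict_univ,
      ← ofReal_integral_eq_lintegral_ofReal hint (Filter.Eventually.of_forall hpos), hnorm,
      ENNReal.ofReal_one]
  haveI : IsProbabilityMeasure μ := ⟨hμuniv⟩
  -- measurability of the pieces
  have hTm : ∀ θ, Measurable (T θ) := fun θ =>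
    hT.comp (measurable_const.prodMk measurable_id)
  have hQm2 : Measurable fun p : Ω × ℝ => ENNReal.ofReal (Qh p) :=
    ENNReal.measurable_ofReal.comp hQmeas
  -- nonnegativity and integrability of the transfer densities
  have hPint : ∀ θ, Integrable (Pθ θ h) m := fun θ => (htrans θ h hint).1
  have hPnn : ∀ θ, 0 ≤ᵐ[m] Pθ θ h := by
    intro θ
    refine ae_nonneg_of_forall_setIntegral_nonneg (hPint θ) fun A hA _ => ?_
    rw [← (htrans θ h hint).2 A hA]
    exact integral_nonneg hpos
  have hQnn : ∀ θ, ∀ᵐ x ∂m, 0 ≤ Qh (x, θ) := by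
    intro θ
    filter_upwards [hQ θ, hPnn θ] with x h1 h2
    rw [h1]; exact h2
  have hQint : ∀ θ, Integrable (fun x => Qh (x, θ)) m := fun θ =>
    (hPint θ).congr (hQ θ).symm
  -- Key identity K1
  have K1 : ∀ (θ : ℝ) (B : Set Ω), MeasurableSet B →
      ∫⁻ x in B, ENNReal.ofReal (Qh (x, θ)) ∂m = μ (T θ ⁻¹' B) := by
    intro θ B hB
    rw [hμdef, withDensity_apply _ ((hTm θ) hB)]
    calc ∫⁻ x in B, ENNReal.ofReal (Qh (x, θ)) ∂m
        = ENNReal.ofReal (∫ x in B, Qh (x, θ) ∂m) :=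
          (ofReal_integral_eq_lintegral_ofReal ((hQint θ).restrict)
            (ae_restrict_of_ae (hQnn θ))).symm
      _ = ENNReal.ofReal (∫ x in B, Pθ θ h x ∂m) := by
          rw [integral_congr_ae (ae_restrict_of_ae (hQ θ))]
      _ = ENNReal.ofReal (∫ x in T θ ⁻¹' B, h x ∂m) := by
          rw [(htrans θ h hint).2 B hB]
      _ = ∫⁻ x in T θ ⁻¹' B, ENNReal.ofReal (h x) ∂m :=
          ofReal_integral_eq_lintegral_ofReal hint.restrict
            (ae_restrict_of_ae (Filter.Eventually.of_forall hpos))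
  -- measurability of θ ↦ ∫⁻_B Qh
  have hφmeas : ∀ B : Set Ω, Measurable fun θ => ∫⁻ x in B, ENNReal.ofReal (Qh (x, θ)) ∂m := by
    intro B
    exact Measurable.lintegral_prod_left (μ := m.restrict B)
      (f := fun x θ => ENNReal.ofReal (Qh (x, θ))) hQm2
  -- total mass computation
  have hθtot : ∀ θ, ∫⁻ x, ENNReal.ofReal (Qh (x, θ)) ∂m = 1 := by
    intro θ
    have := K1 θ Set.univ MeasurableSet.univ
    rw [Measure.restrict_univ] at this
    simpa [hμuniv] using this
  have htot : ∫⁻ x, (∫⁻ θ, ENNReal.ofReal (Qh (x, θ)) ∂ν) ∂m = 1 := by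
    rw [lintegral_lintegral_swap (μ := m) (ν := ν)
      (f := fun x θ => ENNReal.ofReal (Qh (x, θ))) hQm2.aemeasurable]
    simp [hθtot]
  have haefin : ∀ᵐ x ∂m, (∫⁻ θ, ENNReal.ofReal (Qh (x, θ)) ∂ν) < ⊤ := by
    refine ae_lt_top ?_ (by rw [htot]; exact ENNReal.one_ne_top)
    exact Measurable.lintegral_prod_right (f := fun x θ => ENNReal.ofReal (Qh (x, θ))) hQm2
  -- a.e. nonnegativity in the product
  have hprodnn : ∀ᵐ x ∂m, ∀ᵐ θ ∂ν, 0 ≤ Qh (x, θ) := by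
    have hE : MeasurableSet {p : Ω × ℝ | Qh p < 0} :=
      measurableSet_lt hQmeas measurable_const
    have hsec0 : ∀ θ, m {a : Ω | Qh (a, θ) < 0} = 0 := by
      intro θ
      have := hQnn θ
      rw [ae_iff] at this
      simpa [not_le] using this
    have : (m.prod ν) {p : Ω × ℝ | Qh p < 0} = 0 := by
      rw [Measure.prod_apply_symm hE]
      simp only [Set.preimage_setOf_eq]
      simp [hsec0]
    have hae : ∀ᵐ p ∂(m.prod ν), 0 ≤ Qh p := by
      rw [ae_iff]
      simpa [not_le] using this
    exact Measure.ae_ae_of_ae_prod hae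
  -- Key identity K2
  have K2 : ∀ᵐ x ∂m, ∫⁻ θ, ENNReal.ofReal (Qh (x, θ)) ∂ν = ENNReal.ofReal (h x) := by
    filter_upwards [hfix, haefin, hprodnn] with x hfx hfin hnn
    have hmeasθ : AEStronglyMeasurable (fun θ => Qh (x, θ)) ν :=
      (hQmeas.comp (measurable_const.prodMk measurable_id)).aestronglyMeasurable
    have hInt : Integrable (fun θ => Qh (x, θ)) ν := by
      refine ⟨hmeasθ, ?_⟩
      show (∫⁻ θ, (‖Qh (x, θ)‖₊ : ENNReal) ∂ν) < ⊤
      have : ∫⁻ θ, (‖Qh (x, θ)‖₊ : ENNReal) ∂ν = ∫⁻ θ, ENNReal.ofReal (Qh (x, θ)) ∂ν := by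
        refine lintegral_congr_ae ?_
        filter_upwards [hnn] with θ hθ
        exact Real.enorm_eq_ofReal hθ
      rw [this]; exact hfin
    rw [← hfx, ofReal_integral_eq_lintegral_ofReal hInt hnn]
  -- Key identity KB: averaged invariance of μ
  have KB : ∀ B : Set Ω, MeasurableSet B → ∫⁻ θ, μ (T θ ⁻¹' B) ∂ν = μ B := by
    intro B hB
    calc ∫⁻ θ, μ (T θ ⁻¹' B) ∂ν
        = ∫⁻ θ, ∫⁻ x in B, ENNReal.ofReal (Qh (x, θ)) ∂m ∂ν :=
          lintegral_congr fun θ => (K1 θ B hB).symm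
      _ = ∫⁻ x in B, ∫⁻ θ, ENNReal.ofReal (Qh (x, θ)) ∂ν ∂m := by
          rw [lintegral_lintegral_swap (μ := ν) (ν := m.restrict B)
            (f := fun θ x => ENNReal.ofReal (Qh (x, θ)))
            ((ENNReal.measurable_ofReal.comp
              (hQmeas.comp (measurable_snd.prodMk measurable_fst))).aemeasurable)]
      _ = ∫⁻ x in B, ENNReal.ofReal (h x) ∂m :=
          lintegral_congr_ae (ae_restrict_of_ae K2)
      _ = μ B := (withDensity_apply _ hB).symm
  -- the coordinate factorization map
  set e : (ℕ → ℝ) → ℝ × (ℕ → ℝ) := fun ϑ => (ϑ 0, fun n => ϑ (n + 1)) with he_def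
  have he : Measurable e :=
    (measurable_pi_apply 0).prodMk (measurable_pi_lambda _ fun n => measurable_pi_apply (n + 1))
  -- νN factorizes through e
  have hmap : Measure.map e νN = ν.prod νN := by
    refine ext_of_generate_finite _
      (generateFrom_eq_prod MeasurableSpace.generateFrom_measurableSet
        generateFrom_boxes isCountablySpanning_measurableSet isCountablySpanning_boxes).symm
      (MeasurableSpace.isPiSystem_measurableSet.prod isPiSystem_boxes) ?_ ?_
    · rintro _ ⟨A, hA, S, ⟨s, B, hB, rfl⟩, rfl⟩
      have hA' : MeasurableSet A := hA
      have hboxm : MeasurableSet {ϑ : ℕ → ℝ | ∀ i ∈ s, ϑ i ∈ B i} := measurableSet_box hB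
      rw [Measure.map_apply he (hA'.prod hboxm), Measure.prod_prod,
        hνN s B hB]
      have hpre : e ⁻¹' (A ×ˢ {ϑ : ℕ → ℝ | ∀ i ∈ s, ϑ i ∈ B i}) =
          {ϑ : ℕ → ℝ | ∀ j ∈ insert 0 (s.image (· + 1)),
            ϑ j ∈ (fun j => if j = 0 then A else B (j - 1)) j} := by
        ext ϑ
        simp only [Set.mem_preimage, Set.mem_prod, Set.mem_setOf_eq, he_def,
          Finset.mem_insert, Finset.mem_image]
        constructor
        · rintro ⟨h1, h2⟩ j hj
          rcases hj with rfl | ⟨i, hi, rfl⟩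
          · simpa using h1
          · simpa using h2 i hi
        · intro H
          refine ⟨by simpa using H 0 (Or.inl rfl), fun i hi => ?_⟩
          simpa using H (i + 1) (Or.inr ⟨i, hi, rfl⟩)
      rw [hpre, hνN _ _ (by
        intro j
        show MeasurableSet (if j = 0 then A else B (j - 1))
        split_ifs with hj
        · exact hA'
        · exact hB _)]
      have h0 : (0 : ℕ) ∉ s.image (· + 1) := by simp
      rw [Finset.prod_insert h0]
      have : ∏ j ∈ s.image (· + 1), ν (if j = 0 then A else B (j - 1)) =
          ∏ i ∈ s, ν (B i) := by
        rw [Finset.prod_image (by intro a _ b _ hab; simp only at hab; omega)]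
        refine Finset.prod_congr rfl fun i _ => ?_
        simp
      rw [this]
      simp
    · rw [Measure.map_apply he MeasurableSet.univ]
      simp [hνNuniv]
  -- measurability of F
  have hFeq : F = fun p : (ℕ → ℝ) × Ω => ((fun n => p.1 (n + 1)), T (p.1 0) p.2) := by
    funext p
    rcases p with ⟨ϑ, x⟩
    exact hF ϑ x
  have hT2 : Measurable fun p : (ℕ → ℝ) × Ω => T (p.1 0) p.2 := by
    have : (fun p : (ℕ → ℝ) × Ω => T (p.1 0) p.2) =
        (fun q : ℝ × Ω => T q.1 q.2) ∘ fun p : (ℕ → ℝ) × Ω => (p.1 0, p.2) := rfl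
    rw [this]
    exact hT.comp (((measurable_pi_apply 0).comp measurable_fst).prodMk measurable_snd)
  have hFm : Measurable F := by
    rw [hFeq]
    exact (measurable_pi_lambda _ fun n =>
      (measurable_pi_apply (n + 1)).comp measurable_fst).prodMk hT2
  -- invariance on rectangles, hence everywhere
  have hmapF : νN.prod μ = Measure.map F (νN.prod μ) := by
    refine Measure.prod_eq fun S B hS hB => ?_
    rw [Measure.map_apply hFm (hS.prod hB)]
    have hpre : F ⁻¹' (S ×ˢ B) =
        {p : (ℕ → ℝ) × Ω | (fun n => p.1 (n + 1)) ∈ S ∧ T (p.1 0) p.2 ∈ B} := by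
      ext ⟨ϑ, x⟩
      simp [hF ϑ x, Set.mem_prod]
    have hmeaspre : MeasurableSet
        {p : (ℕ → ℝ) × Ω | (fun n => p.1 (n + 1)) ∈ S ∧ T (p.1 0) p.2 ∈ B} := by
      rw [← hpre]; exact hFm (hS.prod hB)
    rw [hpre, Measure.prod_apply hmeaspre]
    have hsec : ∀ ϑ : ℕ → ℝ,
        μ (Prod.mk ϑ ⁻¹'
          {p : (ℕ → ℝ) × Ω | (fun n => p.1 (n + 1)) ∈ S ∧ T (p.1 0) p.2 ∈ B}) =
        S.indicator (1 : (ℕ → ℝ) → ENNReal) (fun n => ϑ (n + 1)) * μ (T (ϑ 0) ⁻¹' B) := by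
      intro ϑ
      by_cases hϑ : (fun n => ϑ (n + 1)) ∈ S
      · have : Prod.mk ϑ ⁻¹'
            {p : (ℕ → ℝ) × Ω | (fun n => p.1 (n + 1)) ∈ S ∧ T (p.1 0) p.2 ∈ B} =
            T (ϑ 0) ⁻¹' B := by
          ext x; simp [hϑ]
        rw [this, Set.indicator_of_mem hϑ, Pi.one_apply, one_mul]
      · have : Prod.mk ϑ ⁻¹'
            {p : (ℕ → ℝ) × Ω | (fun n => p.1 (n + 1)) ∈ S ∧ T (p.1 0) p.2 ∈ B} =
            (∅ : Set Ω) := by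
          ext x; simp [hϑ]
        rw [this, Set.indicator_of_notMem hϑ, zero_mul, measure_empty]
    rw [lintegral_congr hsec]
    -- pull back through e
    have hGmeas : Measurable (fun q : ℝ × (ℕ → ℝ) =>
        S.indicator (1 : (ℕ → ℝ) → ENNReal) q.2 * μ (T q.1 ⁻¹' B)) := by
      apply Measurable.mul
      · exact (measurable_const.indicator hS).comp measurable_snd
      · have : (fun q : ℝ × (ℕ → ℝ) => μ (T q.1 ⁻¹' B)) =
            (fun θ => ∫⁻ x in B, ENNReal.ofReal (Qh (x, θ)) ∂m) ∘ Prod.fst :=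
          funext fun q => (K1 q.1 B hB).symm
        rw [this]
        exact (hφmeas B).comp measurable_fst
    have hstep : ∫⁻ ϑ, S.indicator (1 : (ℕ → ℝ) → ENNReal) (fun n => ϑ (n + 1)) *
          μ (T (ϑ 0) ⁻¹' B) ∂νN
        = ∫⁻ q, S.indicator (1 : (ℕ → ℝ) → ENNReal) q.2 * μ (T q.1 ⁻¹' B) ∂(ν.prod νN) := by
      rw [← hmap, lintegral_map hGmeas he]
    rw [hstep, lintegral_prod _ hGmeas.aemeasurable]
    calc ∫⁻ θ, ∫⁻ ψ, S.indicator (1 : (ℕ → ℝ) → ENNReal) ψ * μ (T θ ⁻¹' B) ∂νN ∂ν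
        = ∫⁻ θ, νN S * μ (T θ ⁻¹' B) ∂ν := by
          refine lintegral_congr fun θ => ?_
          rw [lintegral_mul_const _ (measurable_one.indicator hS),
            lintegral_indicator_one hS]
      _ = νN S * ∫⁻ θ, μ (T θ ⁻¹' B) ∂ν := by
          have hμTmeas : Measurable fun θ => μ (T θ ⁻¹' B) := by
            have : (fun θ => μ (T θ ⁻¹' B)) =
                fun θ => ∫⁻ x in B, ENNReal.ofReal (Qh (x, θ)) ∂m :=
              funext fun θ => (K1 θ B hB).symm
            rw [this]; exact hφmeas B
          exact lintegral_const_mul _ hμTmeas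
      _ = νN S * μ B := by rw [KB B hB]
  intro C hC
  rw [← Measure.map_apply hFm hC, ← hmapF]
end
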